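/- arXiv:2309.16563 — 5 statements merged into one kernel-verified Lean document; each statement's English description precedes it below -/
import Mathlib

section
/- For any ε ∈ (0, 1/2) and Δ > 0, there exists a unique c > 0 satisfying 1/(1-ε) = c·Φ(Δ₋/2) + Φ(Δ₊/2), where Δ₊ = Δ + (2/Δ)·log(1/c), Δ₋ = Δ - (2/Δ)·log(1/c), and Φ is the standard Gaussian CDF. Uniqueness follows because the map c ↦ c·Φ(Δ₋/2) + Φ(Δ₊/2) is strictly increasing in c. -/
open MeasureTheory ProbabilityTheory Real Set
open scoped ENNReal

noncomputable section

/-- Standard normal probability density function. -/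
def stdphi (x : ℝ) : ℝ := (Real.sqrt (2 * Real.pi))⁻¹ * Real.exp (-x ^ 2 / 2)

/-- Standard normal cumulative distribution function. -/
def stdPhi (x : ℝ) : ℝ := ((gaussianReal 0 1) (Set.Iic x)).toReal

/-- Standard normal quantile function. -/
def stdPhiInv (p : ℝ) : ℝ := sInf {x : ℝ | p ≤ stdPhi x}

/-- Minimum distinction gap under corruption, `Δ_min = 2 Φ⁻¹(1/(2(1-ε)))`. -/
def Dmin (ε : ℝ) : ℝ := 2 * stdPhiInv (1 / (2 * (1 - ε)))

/-- `ε`-corrupted mixture `(1-ε) μ + ε H` of two measures on `ℝ`. -/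
def mix (ε : ℝ) (μ H : Measure ℝ) : Measure ℝ :=
  ENNReal.ofReal (1 - ε) • μ + ENNReal.ofReal ε • H

open Classical in
/-- Kullback–Leibler divergence. -/
def KLdiv (P Q : Measure ℝ) : ℝ≥0∞ :=
  if P ≪ Q ∧ Integrable (fun x => Real.log (P.rnDeriv Q x).toReal) P then
    ENNReal.ofReal (∫ x, Real.log (P.rnDeriv Q x).toReal ∂P) else ⊤

/-- Corrupted Gaussian divergence `kl^ε_G(x, y)`: the infimum over pairs of corruption
distributions of the KL divergence between the corrupted unit-variance Gaussians. -/
def klG (ε x y : ℝ) : ℝ≥0∞ :=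
  ⨅ (H : Measure ℝ) (_ : IsProbabilityMeasure H) (H' : Measure ℝ)
    (_ : IsProbabilityMeasure H'),
    KLdiv (mix ε (gaussianReal x 1) H) (mix ε (gaussianReal y 1) H')

/-- (Lower) median of a probability measure on `ℝ`. -/
def measMed (μ : Measure ℝ) : ℝ := sInf {x : ℝ | 1 / 2 ≤ (μ (Set.Iic x)).toReal}

/-- Quantile function of a probability measure on `ℝ`. -/
def quantile (μ : Measure ℝ) (p : ℝ) : ℝ := sInf {x : ℝ | p ≤ (μ (Set.Iic x)).toReal}

/-- Empirical median of a finite sample. -/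
def empMed {n : ℕ} (X : Fin n → ℝ) : ℝ :=
  sInf {x : ℝ | (n : ℝ) ≤ 2 * Nat.card {i : Fin n // X i ≤ x}}

/-- The variance proxy `s_ε` for the concentration of the median under corruption. -/
def sEps (ε : ℝ) : ℝ :=
  (Real.sqrt (ε / 2 / Real.log (1 / (1 - 2 * ε))) +
      Real.sqrt ((1 - 2 * ε) / (4 * Real.log ((1 - ε) / ε)))) /
    ((1 - ε) * stdphi (Dmin ε / 2 + 1))

/-- Mean of a measure on `ℝ`. -/
def meanOf (μ : Measure ℝ) : ℝ := ∫ x, x ∂μ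

/-- Corrupted KL-inf `KL^ε_inf(η, x; L)`. -/
def KLinf (ε : ℝ) (η : Measure ℝ) (x : ℝ) (L : Set (Measure ℝ)) : ℝ≥0∞ :=
  ⨅ (κ : Measure ℝ) (_ : κ ∈ L) (_ : x ≤ meanOf κ) (H : Measure ℝ)
    (_ : IsProbabilityMeasure H) (H' : Measure ℝ) (_ : IsProbabilityMeasure H'),
    KLdiv (mix ε η H) (mix ε κ H')

lemma stdphi_eq_gaussianPDFReal : stdphi = gaussianPDFReal 0 1 := by
  ext x
  rw [stdphi, gaussianPDFReal]
  norm_num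

lemma stdphi_pos (x : ℝ) : 0 < stdphi x := by
  rw [stdphi_eq_gaussianPDFReal]
  exact gaussianPDFReal_pos _ _ _ one_ne_zero

lemma continuous_stdphi : Continuous stdphi := by
  unfold stdphi
  continuity

lemma integrable_stdphi : Integrable stdphi := by
  rw [stdphi_eq_gaussianPDFReal]; exact integrable_gaussianPDFReal 0 1

lemma stdPhi_eq_integral (x : ℝ) : stdPhi x = ∫ t in Iic x, stdphi t := by
  rw [stdPhi, gaussianReal_apply_eq_integral 0 one_ne_zero, ENNReal.toReal_ofReal,
    stdphi_eq_gaussianPDFReal]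
  exact setIntegral_nonneg measurableSet_Iic fun t _ => gaussianPDFReal_nonneg 0 1 t

lemma stdPhi_sub (a b : ℝ) : stdPhi b - stdPhi a = ∫ t in a..b, stdphi t := by
  rw [stdPhi_eq_integral, stdPhi_eq_integral]
  exact intervalIntegral.integral_Iic_sub_Iic integrable_stdphi.integrableOn integrable_stdphi.integrableOn

lemma hasDerivAt_stdPhi (x : ℝ) : HasDerivAt stdPhi (stdphi x) x := by
  have h : HasDerivAt (fun u => ∫ t in (0:ℝ)..u, stdphi t) (stdphi x) x :=
    intervalIntegral.integral_hasDerivAt_right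
      (integrable_stdphi.intervalIntegrable)
      continuous_stdphi.aestronglyMeasurable.stronglyMeasurableAtFilter
      continuous_stdphi.continuousAt
  have : stdPhi = fun u => stdPhi 0 + ∫ t in (0:ℝ)..u, stdphi t := by
    ext u; rw [← stdPhi_sub]; ring
  rw [this]
  exact h.const_add _

lemma stdPhi_pos (x : ℝ) : 0 < stdPhi x := by
  have h1 : 0 ≤ stdPhi (x - 1) := by
    rw [stdPhi_eq_integral]
    exact setIntegral_nonneg measurableSet_Iic fun t _ => (stdphi_pos t).le
  have h2 : 0 < ∫ t in (x-1)..x, stdphi t := by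
    apply intervalIntegral.intervalIntegral_pos_of_pos_on
      (integrable_stdphi.intervalIntegrable)
      (fun t _ => stdphi_pos t) (by linarith)
  have := stdPhi_sub (x - 1) x
  linarith

lemma stdPhi_le_one (x : ℝ) : stdPhi x ≤ 1 := by
  rw [stdPhi]
  have : (gaussianReal 0 1) (Set.Iic x) ≤ 1 := prob_le_one
  exact ENNReal.toReal_le_of_le_ofReal zero_le_one (by simpa using this)

lemma stdPhi_lt_one (x : ℝ) : stdPhi x < 1 := by
  have h2 : 0 < ∫ t in x..(x+1), stdphi t := by
    apply intervalIntegral.intervalIntegral_pos_of_pos_on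
      (integrable_stdphi.intervalIntegrable)
      (fun t _ => stdphi_pos t) (by linarith)
  have := stdPhi_sub x (x + 1)
  have := stdPhi_le_one (x + 1)
  linarith

lemma stdPhi_mono : Monotone stdPhi := fun a b hab => by
  have h := stdPhi_sub a b
  have h2 : 0 ≤ ∫ t in a..b, stdphi t := by
    rw [intervalIntegral.integral_of_le hab]
    exact setIntegral_nonneg measurableSet_Ioc fun t _ => (stdphi_pos t).le

  linarith

/-- existence and uniqueness of the normalisation constant `c`. -/
theorem exists_unique_normalisation_constant (ε Δ : ℝ) (hε : ε ∈ Set.Ioo (0 : ℝ) (1 / 2))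
    (hΔ : 0 < Δ) :
    ∃! c : ℝ, 0 < c ∧
      1 / (1 - ε) =
        c * stdPhi ((Δ - 2 / Δ * Real.log (1 / c)) / 2) +
          stdPhi ((Δ + 2 / Δ * Real.log (1 / c)) / 2) := by
  obtain ⟨hε0, hε2⟩ := hε
  have hΔ' : Δ ≠ 0 := hΔ.ne'
  set L : ℝ := 1 / (1 - ε) with hL
  have hε1 : 0 < 1 - ε := by linarith
  have hL1 : 1 < L := by
    rw [hL, lt_div_iff₀ hε1]; linarith
  -- the auxiliary function
  set g : ℝ → ℝ := fun t => Real.exp t * stdPhi (Δ / 2 + t / Δ) + stdPhi (Δ / 2 - t / Δ)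
    with hg
  -- key identity
  have hkey : ∀ t : ℝ, Real.exp t * stdphi (Δ / 2 + t / Δ) = stdphi (Δ / 2 - t / Δ) := by
    intro t
    unfold stdphi
    rw [mul_comm (Real.exp t), mul_assoc, ← Real.exp_add]
    congr 1
    field_simp
    ring
  -- derivative
  have hg' : ∀ t : ℝ, HasDerivAt g (Real.exp t * stdPhi (Δ / 2 + t / Δ)) t := by
    intro t
    have h1 : HasDerivAt (fun s : ℝ => Δ / 2 + s / Δ) (1 / Δ) t := by
      simpa using ((hasDerivAt_id t).div_const Δ).const_add (Δ / 2)
    have h2 : HasDerivAt (fun s : ℝ => Δ / 2 - s / Δ) (-(1 / Δ)) t := by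
      simpa using ((hasDerivAt_id t).div_const Δ).const_sub (Δ / 2)
    have hp1 : HasDerivAt (fun s => stdPhi (Δ / 2 + s / Δ))
        (stdphi (Δ / 2 + t / Δ) * (1 / Δ)) t := (hasDerivAt_stdPhi _).comp t h1
    have hp2 : HasDerivAt (fun s => stdPhi (Δ / 2 - s / Δ))
        (stdphi (Δ / 2 - t / Δ) * (-(1 / Δ))) t := (hasDerivAt_stdPhi _).comp t h2
    have := ((Real.hasDerivAt_exp t).mul hp1).add hp2
    refine this.congr_deriv ?_
    rw [← hkey t]
    ring
  -- strict monotonicity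
  have hmono : StrictMono g := by
    apply strictMono_of_deriv_pos
    intro t
    rw [(hg' t).deriv]
    exact mul_pos (Real.exp_pos t) (stdPhi_pos _)
  have hcont : Continuous g := by
    rw [continuous_iff_continuousAt]; exact fun t => (hg' t).continuousAt
  -- lower point
  set t0 : ℝ := Real.log (L - 1) with ht0
  have hgt0 : g t0 < L := by
    have he : Real.exp t0 = L - 1 := Real.exp_log (by linarith)
    have h1 : Real.exp t0 * stdPhi (Δ / 2 + t0 / Δ) ≤ Real.exp t0 := by
      simpa using mul_le_mul_of_nonneg_left (stdPhi_le_one (Δ / 2 + t0 / Δ)) (Real.exp_pos t0).le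
    have h2 : stdPhi (Δ / 2 - t0 / Δ) < 1 := stdPhi_lt_one _
    simp only [hg]
    linarith
  -- upper point
  have hPhipos : 0 < stdPhi (Δ / 2) := stdPhi_pos _
  set t1 : ℝ := max 1 (Real.log (L / stdPhi (Δ / 2)) + 1) with ht1
  have hgt1 : L < g t1 := by
    have ht1pos : 0 ≤ t1 := le_trans zero_le_one (le_max_left _ _)
    have h1 : L / stdPhi (Δ / 2) < Real.exp t1 := by
      calc L / stdPhi (Δ / 2) < Real.exp (Real.log (L / stdPhi (Δ / 2)) + 1) := by
            have := Real.add_one_le_exp (Real.log (L / stdPhi (Δ / 2)) + 1)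
            have hlog : Real.log (L / stdPhi (Δ / 2)) <
                Real.exp (Real.log (L / stdPhi (Δ / 2)) + 1) := by linarith
            calc L / stdPhi (Δ / 2)
                = Real.exp (Real.log (L / stdPhi (Δ / 2))) :=
                  (Real.exp_log (div_pos (by linarith) hPhipos)).symm
              _ < Real.exp (Real.log (L / stdPhi (Δ / 2)) + 1) := by
                  apply Real.exp_lt_exp.mpr; linarith
        _ ≤ Real.exp t1 := Real.exp_le_exp.mpr (le_max_right _ _)
    have h2 : stdPhi (Δ / 2) ≤ stdPhi (Δ / 2 + t1 / Δ) := by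
      apply stdPhi_mono
      have : 0 ≤ t1 / Δ := div_nonneg ht1pos hΔ.le
      linarith
    have h3 : L < Real.exp t1 * stdPhi (Δ / 2) := by
      rw [div_lt_iff₀ hPhipos] at h1; linarith
    have h4 : Real.exp t1 * stdPhi (Δ / 2) ≤ Real.exp t1 * stdPhi (Δ / 2 + t1 / Δ) :=
      mul_le_mul_of_nonneg_left h2 (Real.exp_pos t1).le
    have h5 : 0 < stdPhi (Δ / 2 - t1 / Δ) := stdPhi_pos _
    simp only [hg]
    linarith
  -- intermediate value
  have h01 : t0 ≤ t1 := le_of_lt (hmono.lt_iff_lt.mp (by linarith))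
  obtain ⟨t, _, hgt⟩ : ∃ t ∈ Icc t0 t1, g t = L := by
    have := intermediate_value_Icc h01 hcont.continuousOn
    obtain ⟨t, ht, hgt⟩ := this ⟨hgt0.le, hgt1.le⟩
    exact ⟨t, ht, hgt⟩
  -- translate between g and the target equation
  have htrans : ∀ c : ℝ, 0 < c →
      (c * stdPhi ((Δ - 2 / Δ * Real.log (1 / c)) / 2) +
        stdPhi ((Δ + 2 / Δ * Real.log (1 / c)) / 2)) = g (Real.log c) := by
    intro c hc
    have h1 : (Δ - 2 / Δ * Real.log (1 / c)) / 2 = Δ / 2 + Real.log c / Δ := by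
      rw [one_div, Real.log_inv]; field_simp; ring
    have h2 : (Δ + 2 / Δ * Real.log (1 / c)) / 2 = Δ / 2 - Real.log c / Δ := by
      rw [one_div, Real.log_inv]; field_simp; ring
    simp only [hg, h1, h2, Real.exp_log hc]
  refine ⟨Real.exp t, ⟨Real.exp_pos t, ?_⟩, ?_⟩
  · rw [htrans _ (Real.exp_pos t), Real.log_exp, hgt]
  · rintro c ⟨hc, heq⟩
    rw [htrans c hc] at heq
    have : g (Real.log c) = g t := by rw [← heq, hgt]
    have := hmono.injective this
    rw [← this, Real.exp_log hc]
end
end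

section
/- Let ε ∈ (0,1/2), and suppose |m(κ) - m(η)| ≤ 2·Φ⁻¹(1/(2(1-ε))) for two unit-variance Gaussian distributions κ = N(m(κ),1) and η = N(m(η),1). Then there exist probability distributions H₁, H₂ on ℝ such that (1-ε)κ + ε·H₁ = (1-ε)η + ε·H₂, i.e., the ε-corruption neighbourhoods of κ and η intersect. -/
open MeasureTheory ProbabilityTheory Real Set
open scoped ENNReal

noncomputable section

lemma gauss_Iic (m x : ℝ) : (gaussianReal m 1) (Iic x) = (gaussianReal 0 1) (Iic (x - m)) := by
  have h := gaussianReal_map_add_const (μ := 0) (v := 1) m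
  rw [zero_add] at h
  rw [← h, Measure.map_apply (measurable_add_const m) measurableSet_Iic]
  congr 1
  ext y
  simp [le_sub_iff_add_le]

lemma stdPhi_neg (x : ℝ) : stdPhi (-x) = 1 - stdPhi x := by
  have hmap : (gaussianReal 0 1).map (fun y => (-1 : ℝ) * y) = gaussianReal 0 1 := by
    rw [gaussianReal_map_const_mul (-1 : ℝ)]
    norm_num
  have h1 : (gaussianReal 0 1) (Iic (-x)) = (gaussianReal 0 1) (Ici x) := by
    conv_lhs => rw [← hmap]
    rw [Measure.map_apply (by fun_prop) measurableSet_Iic]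
    congr 1
    ext y
    simp
  have hsing : (gaussianReal 0 1) {x} = 0 :=
    gaussianReal_absolutelyContinuous 0 one_ne_zero (by simp)
  have hIci : (gaussianReal 0 1) (Ici x) = (gaussianReal 0 1) (Ioi x) := by
    refine le_antisymm ?_ (measure_mono Ioi_subset_Ici_self)
    calc (gaussianReal 0 1) (Ici x) = (gaussianReal 0 1) (Ioi x ∪ {x}) := by
          rw [Set.Ioi_union_left]
      _ ≤ (gaussianReal 0 1) (Ioi x) + (gaussianReal 0 1) {x} := measure_union_le _ _
      _ = (gaussianReal 0 1) (Ioi x) := by rw [hsing, add_zero]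
  have hu : (gaussianReal 0 1) (Iic x) + (gaussianReal 0 1) (Ioi x) = 1 := by
    rw [← measure_union (Iic_disjoint_Ioi le_rfl) measurableSet_Ioi, Iic_union_Ioi, measure_univ]
  have h2 : (gaussianReal 0 1) (Iic (-x)) = 1 - (gaussianReal 0 1) (Iic x) := by
    rw [h1, hIci]
    exact ENNReal.eq_sub_of_add_eq (measure_ne_top _ _) (by rw [add_comm]; exact hu)
  rw [stdPhi, stdPhi, h2, ENNReal.toReal_sub_of_le prob_le_one ENNReal.one_ne_top,
    ENNReal.toReal_one]

lemma stdPhi_zero : stdPhi 0 = 1 / 2 := by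
  have := stdPhi_neg 0
  rw [neg_zero] at this
  linarith

lemma gaussianPDFReal_le_one (m x : ℝ) : gaussianPDFReal m 1 x ≤ 1 := by
  rw [gaussianPDFReal]
  simp only [NNReal.coe_one, mul_one]
  have hs : (1:ℝ) ≤ Real.sqrt (2 * π) := by
    nlinarith [Real.pi_gt_three, Real.sq_sqrt (by positivity : (0:ℝ) ≤ 2*π),
      Real.sqrt_nonneg (2*π)]
  have h2 : Real.exp (-(x - m) ^ 2 / 2) ≤ 1 := by
    rw [Real.exp_le_one_iff]
    nlinarith [sq_nonneg (x - m)]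
  calc (Real.sqrt (2 * π))⁻¹ * Real.exp (-(x - m) ^ 2 / 2) ≤ 1 * 1 := by
        exact mul_le_mul (inv_le_one_of_one_le₀ hs) h2 (Real.exp_nonneg _) zero_le_one
    _ = 1 := by norm_num

lemma stdPhi_lip {x y : ℝ} (hxy : x ≤ y) : stdPhi y - stdPhi x ≤ y - x := by
  have hIoc : (gaussianReal 0 1) (Ioc x y) ≤ ENNReal.ofReal (y - x) := by
    rw [gaussianReal_apply 0 one_ne_zero]
    calc ∫⁻ t in Ioc x y, gaussianPDF 0 1 t
        ≤ ∫⁻ _ in Ioc x y, 1 := by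
          refine lintegral_mono fun t => ?_
          rw [gaussianPDF, show (1:ℝ≥0∞) = ENNReal.ofReal 1 by simp]
          exact ENNReal.ofReal_le_ofReal (gaussianPDFReal_le_one 0 t)
      _ = ENNReal.ofReal (y - x) := by simp [Real.volume_Ioc]
  have hsplit : (gaussianReal 0 1) (Iic y) =
      (gaussianReal 0 1) (Iic x) + (gaussianReal 0 1) (Ioc x y) := by
    rw [← measure_union (Iic_disjoint_Ioc le_rfl) measurableSet_Ioc, Iic_union_Ioc_eq_Iic hxy]
  have h1 := measure_ne_top (gaussianReal 0 1) (Iic x)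
  have h2 := measure_ne_top (gaussianReal 0 1) (Ioc x y)
  rw [stdPhi, stdPhi, hsplit, ENNReal.toReal_add h1 h2]
  have := ENNReal.toReal_le_of_le_ofReal (by linarith) hIoc
  linarith

lemma stdPhi_le_of_le_inv {p x : ℝ} (hp : 1 / 2 < p) (hx : x ≤ stdPhiInv p) : stdPhi x ≤ p := by
  have hx' : x ≤ sInf {z : ℝ | p ≤ stdPhi z} := hx
  set S := {z : ℝ | p ≤ stdPhi z} with hS
  have hbdd : BddBelow S := by
    refine ⟨0, fun y hy => ?_⟩
    by_contra hy0
    push_neg at hy0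
    have : stdPhi y ≤ 1 / 2 := by rw [← stdPhi_zero]; exact stdPhi_mono hy0.le
    exact absurd hy (by simp only [hS, mem_setOf_eq]; push_neg; linarith)
  rcases eq_empty_or_nonempty S with hSe | hSne
  · rw [hSe, Real.sInf_empty] at hx'
    calc stdPhi x ≤ stdPhi 0 := stdPhi_mono hx'
      _ ≤ p := by rw [stdPhi_zero]; linarith
  · have hq : ∀ z < sInf S, stdPhi z < p := by
      intro z hz
      by_contra hc
      push_neg at hc
      exact absurd (csInf_le hbdd hc) (not_le.2 hz)
    have hPhiq : stdPhi (sInf S) ≤ p := by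
      by_contra hc
      push_neg at hc
      set q := sInf S
      set δ := stdPhi q - p with hδ
      have hδpos : 0 < δ := by linarith
      have hz := hq (q - δ / 2) (by linarith)
      have := stdPhi_lip (show q - δ/2 ≤ q by linarith)
      linarith
    calc stdPhi x ≤ stdPhi (sInf S) := stdPhi_mono hx'
      _ ≤ p := hPhiq

lemma pdf_le {a b x : ℝ} (hab : a ≤ b) (hx : x ≤ (a + b) / 2) :
    gaussianPDFReal b 1 x ≤ gaussianPDFReal a 1 x := by
  rw [gaussianPDFReal, gaussianPDFReal]
  simp only [NNReal.coe_one, mul_one]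
  have hs : (0:ℝ) < (Real.sqrt (2 * π))⁻¹ := by positivity
  refine mul_le_mul_of_nonneg_left (Real.exp_le_exp.2 ?_) hs.le
  have : (x - b)^2 - (x - a)^2 = (a - b) * (2*x - a - b) := by ring
  nlinarith [mul_nonneg (sub_nonneg.2 hab) (by linarith : (a:ℝ) + b - 2*x ≥ 0)]

lemma pdf_le' {a b x : ℝ} (hab : a ≤ b) (hx : (a + b) / 2 ≤ x) :
    gaussianPDFReal a 1 x ≤ gaussianPDFReal b 1 x := by
  rw [gaussianPDFReal, gaussianPDFReal]
  simp only [NNReal.coe_one, mul_one]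
  have hs : (0:ℝ) < (Real.sqrt (2 * π))⁻¹ := by positivity
  refine mul_le_mul_of_nonneg_left (Real.exp_le_exp.2 ?_) hs.le
  nlinarith [mul_nonneg (sub_nonneg.2 hab) (by linarith : 2*x - (a:ℝ) - b ≥ 0)]

lemma setInt_Iic (m x : ℝ) : ∫ t in Iic x, gaussianPDFReal m 1 t = stdPhi (x - m) := by
  have h := gaussianReal_apply_eq_integral m one_ne_zero (Iic x)
  rw [gauss_Iic] at h
  have hnn : 0 ≤ ∫ t in Iic x, gaussianPDFReal m 1 t :=
    integral_nonneg fun t => gaussianPDFReal_nonneg m 1 t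
  rw [stdPhi, h, ENNReal.toReal_ofReal hnn]

lemma setInt_Ioi (m x : ℝ) : ∫ t in Ioi x, gaussianPDFReal m 1 t = 1 - stdPhi (x - m) := by
  have hint := integrable_gaussianPDFReal m 1
  have h := integral_add_compl (measurableSet_Iic (a := x)) hint
  rw [compl_Iic] at h
  rw [integral_gaussianPDFReal_eq_one m one_ne_zero, setInt_Iic m x] at h
  linarith

-- main integral computation
lemma lint_sub_eq (a b : ℝ) (hab : a ≤ b) :
    ∫⁻ x, (gaussianPDF b 1 x - gaussianPDF a 1 x) =
      ENNReal.ofReal (stdPhi ((b - a) / 2) - stdPhi (-((b - a) / 2))) := by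
  set mid := (a + b) / 2 with hmid
  have hmeas : Measurable fun x => gaussianPDF b 1 x - gaussianPDF a 1 x :=
    (measurable_gaussianPDF b 1).sub (measurable_gaussianPDF a 1)
  rw [← lintegral_add_compl (fun x => gaussianPDF b 1 x - gaussianPDF a 1 x)
    (measurableSet_Iic (a := mid)), compl_Iic]
  have h1 : ∫⁻ x in Iic mid, (gaussianPDF b 1 x - gaussianPDF a 1 x) = 0 := by
    rw [setLIntegral_congr_fun measurableSet_Iic (fun x hx => ?_), lintegral_zero]
    exact tsub_eq_zero_of_le (ENNReal.ofReal_le_ofReal (pdf_le hab hx))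
  rw [h1, zero_add]
  have h2 : ∀ x : ℝ, gaussianPDF b 1 x - gaussianPDF a 1 x =
      ENNReal.ofReal (gaussianPDFReal b 1 x - gaussianPDFReal a 1 x) := fun x => by
    rw [gaussianPDF, gaussianPDF, ENNReal.ofReal_sub _ (gaussianPDFReal_nonneg a 1 x)]
  simp_rw [h2]
  rw [← ofReal_integral_eq_lintegral_ofReal]
  · congr 1
    rw [integral_sub ((integrable_gaussianPDFReal b 1).restrict)
      ((integrable_gaussianPDFReal a 1).restrict), setInt_Ioi, setInt_Ioi]
    have e1 : mid - b = -((b - a)/2) := by rw [hmid]; ring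
    have e2 : mid - a = (b - a)/2 := by rw [hmid]; ring
    rw [e1, e2]; ring
  · exact ((integrable_gaussianPDFReal b 1).restrict).sub
      ((integrable_gaussianPDFReal a 1).restrict)
  · refine (ae_restrict_iff' measurableSet_Ioi).2 (ae_of_all _ fun x hx => ?_)
    exact sub_nonneg.2 (pdf_le' hab (le_of_lt hx))

-- symmetry of masses
lemma lint_sub_symm (a b : ℝ) :
    ∫⁻ x, (gaussianPDF a 1 x - gaussianPDF b 1 x) =
      ∫⁻ x, (gaussianPDF b 1 x - gaussianPDF a 1 x) := by
  set f := gaussianPDF a 1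
  set g := gaussianPDF b 1
  have hf : Measurable f := measurable_gaussianPDF a 1
  have hg : Measurable g := measurable_gaussianPDF b 1
  have key : ∀ u v : ℝ → ℝ≥0∞, Measurable u → Measurable v → (∀ x, v x ≠ ⊤) →
      (∫⁻ x, (u x - v x)) + ∫⁻ x, (u x ⊓ v x) = ∫⁻ x, u x := by
    intro u v hu hv hvt
    rw [← lintegral_add_left (by exact hu.sub hv : Measurable fun x => u x - v x) (fun x => u x ⊓ v x)]
    congr 1
    funext x
    rcases le_total (u x) (v x) with h | h
    · rw [tsub_eq_zero_of_le h, zero_add, inf_eq_left.2 h]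
    · rw [inf_eq_right.2 h, tsub_add_cancel_of_le h]
  have h1 := key f g hf hg (fun x => ENNReal.ofReal_ne_top)
  have h2 := key g f hg hf (fun x => ENNReal.ofReal_ne_top)
  rw [lintegral_gaussianPDF_eq_one a one_ne_zero] at h1
  rw [lintegral_gaussianPDF_eq_one b one_ne_zero] at h2
  have hinf : (∫⁻ x, f x ⊓ g x) ≠ ⊤ := by
    refine ne_top_of_le_ne_top (by simp : (1:ℝ≥0∞) ≠ ⊤) ?_
    rw [← lintegral_gaussianPDF_eq_one a one_ne_zero]
    exact lintegral_mono fun x => inf_le_left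
  have hinf' : (∫⁻ x, g x ⊓ f x) = ∫⁻ x, f x ⊓ g x := by
    congr 1; funext x; rw [inf_comm]
  rw [hinf'] at h2
  have := h1.trans h2.symm
  exact (ENNReal.add_left_inj hinf).mp this

lemma aux_main (ε a b : ℝ) (hε : ε ∈ Set.Ioo (0 : ℝ) (1 / 2)) (hab : a ≤ b)
    (h : b - a ≤ 2 * stdPhiInv (1 / (2 * (1 - ε)))) :
    ∃ H₁ H₂ : Measure ℝ, IsProbabilityMeasure H₁ ∧ IsProbabilityMeasure H₂ ∧
      mix ε (gaussianReal a 1) H₁ = mix ε (gaussianReal b 1) H₂ := by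
  obtain ⟨hε0, hε2⟩ := hε
  have hε1 : ε < 1 := by linarith
  set f := gaussianPDF a 1 with hf
  set g := gaussianPDF b 1 with hg
  have hfm : Measurable f := measurable_gaussianPDF a 1
  have hgm : Measurable g := measurable_gaussianPDF b 1
  set c : ℝ≥0∞ := ENNReal.ofReal ((1 - ε) / ε) with hc
  set I : ℝ≥0∞ := ∫⁻ x, (g x - f x) with hI
  set m : ℝ≥0∞ := c * I with hm
  -- bound on m
  have hp : (1:ℝ) / 2 < 1 / (2 * (1 - ε)) := by
    rw [div_lt_div_iff₀ (by norm_num) (by nlinarith)]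
    nlinarith
  have hPhile : stdPhi ((b - a) / 2) ≤ 1 / (2 * (1 - ε)) :=
    stdPhi_le_of_le_inv hp (by linarith)
  have hne1 : (1:ℝ) - ε ≠ 0 := by linarith
  have hm1 : m ≤ 1 := by
    rw [hm, hI, lint_sub_eq a b hab, stdPhi_neg, hc]
    rw [← ENNReal.ofReal_mul (div_nonneg (by linarith) hε0.le)]
    rw [show (1:ℝ≥0∞) = ENNReal.ofReal 1 by simp]
    refine ENNReal.ofReal_le_ofReal ?_
    have key : stdPhi ((b - a) / 2) - (1 - stdPhi ((b - a) / 2)) ≤ ε / (1 - ε) := by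
      have : (1:ℝ) / (2 * (1 - ε)) * 2 - 1 = ε / (1 - ε) := by
        rw [sub_eq_iff_eq_add, div_mul_eq_mul_div, div_add' _ _ _ (by nlinarith),
          div_eq_div_iff (by nlinarith) hne1]
        ring
      nlinarith
    calc (1 - ε) / ε * (stdPhi ((b - a) / 2) - (1 - stdPhi ((b - a) / 2)))
        ≤ (1 - ε) / ε * (ε / (1 - ε)) := by
          refine mul_le_mul_of_nonneg_left key (div_nonneg (by linarith) hε0.le)
      _ = 1 := by field_simp [hε0.ne', hne1]
  have hmtop : m ≠ ⊤ := ne_top_of_le_ne_top (by simp) hm1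
  -- the corruption measures
  set d₁ : ℝ → ℝ≥0∞ := fun x => c * (g x - f x) with hd₁
  set d₂ : ℝ → ℝ≥0∞ := fun x => c * (f x - g x) with hd₂
  have hd₁m : Measurable d₁ := (hgm.sub hfm).const_mul c
  have hd₂m : Measurable d₂ := (hfm.sub hgm).const_mul c
  set H₁ : Measure ℝ := volume.withDensity d₁ + (1 - m) • Measure.dirac 0 with hH₁
  set H₂ : Measure ℝ := volume.withDensity d₂ + (1 - m) • Measure.dirac 0 with hH₂
  have hlint₁ : ∫⁻ x, d₁ x = m := by
    rw [hd₁]; simp only []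
    rw [lintegral_const_mul c (by exact hgm.sub hfm : Measurable fun x => g x - f x)]
  have hlint₂ : ∫⁻ x, d₂ x = m := by
    rw [hd₂]; simp only []
    rw [lintegral_const_mul c (by exact hfm.sub hgm : Measurable fun x => f x - g x)]
    rw [hm, hI]
    congr 1
    exact lint_sub_symm a b
  have hprob : ∀ (d : ℝ → ℝ≥0∞), Measurable d → (∫⁻ x, d x) = m →
      IsProbabilityMeasure (volume.withDensity d + (1 - m) • Measure.dirac 0) := by
    intro d hd hdm
    constructor
    rw [Measure.add_apply, Measure.smul_apply, withDensity_apply d MeasurableSet.univ,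
      setLIntegral_univ, hdm, Measure.dirac_apply_of_mem (mem_univ 0), smul_eq_mul, mul_one]
    exact add_tsub_cancel_of_le hm1
  refine ⟨H₁, H₂, hprob d₁ hd₁m hlint₁, hprob d₂ hd₂m hlint₂, ?_⟩
  -- mix computation
  have hεc : ENNReal.ofReal ε * c = ENNReal.ofReal (1 - ε) := by
    rw [hc, ← ENNReal.ofReal_mul hε0.le]
    congr 1
    field_simp
  have key : ∀ u v : ℝ → ℝ≥0∞, Measurable u → Measurable v →
      ENNReal.ofReal (1 - ε) • volume.withDensity u +
        ENNReal.ofReal ε • (volume.withDensity (fun x => c * (v x - u x)) +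
          (1 - m) • Measure.dirac 0) =
      volume.withDensity (fun x => ENNReal.ofReal (1 - ε) * (u x ⊔ v x)) +
        (ENNReal.ofReal ε * (1 - m)) • Measure.dirac 0 := by
    intro u v hu hv
    rw [smul_add, smul_smul]
    rw [← withDensity_smul _ hu, ← withDensity_smul _ (by exact (hv.sub hu).const_mul c : Measurable fun x => c * (v x - u x))]
    rw [← add_assoc, ← withDensity_add_left (by exact (hu.const_smul _))]
    refine congrArg₂ _ (congrArg _ (funext fun x => ?_)) rfl
    simp only [Pi.add_apply, Pi.smul_apply, smul_eq_mul]
    rw [← mul_assoc, hεc, ← mul_add, add_tsub_eq_max]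
  have e₁ : mix ε (gaussianReal a 1) H₁ =
      volume.withDensity (fun x => ENNReal.ofReal (1 - ε) * (f x ⊔ g x)) +
        (ENNReal.ofReal ε * (1 - m)) • Measure.dirac 0 := by
    rw [mix, gaussianReal_of_var_ne_zero a one_ne_zero, hH₁]
    exact key f g hfm hgm
  have e₂ : mix ε (gaussianReal b 1) H₂ =
      volume.withDensity (fun x => ENNReal.ofReal (1 - ε) * (g x ⊔ f x)) +
        (ENNReal.ofReal ε * (1 - m)) • Measure.dirac 0 := by
    rw [mix, gaussianReal_of_var_ne_zero b one_ne_zero, hH₂]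
    exact key g f hgm hfm
  rw [e₁, e₂]
  exact congrArg₂ _ (congrArg _ (funext fun x => by rw [sup_comm])) rfl

/-- if the Gaussian means are within `2 Φ⁻¹(1/(2(1-ε)))`, the corruption
neighbourhoods intersect. -/
theorem corruption_neighbourhoods_intersect (ε mκ mη : ℝ)
    (hε : ε ∈ Set.Ioo (0 : ℝ) (1 / 2))
    (h : |mκ - mη| ≤ 2 * stdPhiInv (1 / (2 * (1 - ε)))) :
    ∃ H₁ H₂ : Measure ℝ, IsProbabilityMeasure H₁ ∧ IsProbabilityMeasure H₂ ∧
      mix ε (gaussianReal mκ 1) H₁ = mix ε (gaussianReal mη 1) H₂ := by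
  rcases le_total mκ mη with hle | hle
  · refine aux_main ε mκ mη hε hle ?_
    have : |mκ - mη| = mη - mκ := by rw [abs_sub_comm, abs_of_nonneg (by linarith)]
    linarith
  · obtain ⟨H₁, H₂, h₁, h₂, heq⟩ := aux_main ε mη mκ hε hle (by
      have : |mκ - mη| = mκ - mη := abs_of_nonneg (by linarith)
      linarith)
    exact ⟨H₂, H₁, h₂, h₁, heq.symm⟩
end
end

section
/- Let ε ∈ (0,1/2) and let κ = N(m(κ),1) and η = N(m(η),1) be unit-variance Gaussians with |m(κ) - m(η)| > 2·Φ⁻¹(1/(2(1-ε))). Then for all probability distributions H₁, H₂ on ℝ, (1-ε)κ + ε·H₁ ≠ (1-ε)η + ε·H₂, i.e., the ε-corruption neighbourhoods of κ and η are disjoint. -/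
open MeasureTheory ProbabilityTheory Real Set
open scoped ENNReal

noncomputable section

namespace CorruptAux

local notation "G" => gaussianReal 0 1

lemma G_Iic_ne_top (x : ℝ) : (G) (Set.Iic x) ≠ ⊤ := measure_ne_top _ _

lemma gauss_translate (m c : ℝ) :
    (gaussianReal m 1) (Set.Iic c) = (G) (Set.Iic (c - m)) := by
  have h := gaussianReal_map_add_const (μ := 0) (v := 1) m
  rw [zero_add] at h
  rw [← h, Measure.map_apply (by fun_prop) measurableSet_Iic]
  congr 1
  ext x
  simp [Set.mem_Iic, le_sub_iff_add_le]

lemma stdPhi_strictMono : StrictMono stdPhi := by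
  intro x y hxy
  have hpos : (0 : ℝ≥0∞) < (G) (Set.Ioc x y) := by
    rcases eq_or_lt_of_le (zero_le : (0 : ℝ≥0∞) ≤ (G) (Set.Ioc x y)) with h | h
    · exfalso
      have habs := gaussianReal_absolutelyContinuous' 0 (v := 1) (by norm_num)
      have : (volume : Measure ℝ) (Set.Ioc x y) = 0 := habs h.symm
      rw [Real.volume_Ioc] at this
      simp only [ENNReal.ofReal_eq_zero] at this
      linarith
    · exact h
  have hsplit : (G) (Set.Iic y) = (G) (Set.Iic x) + (G) (Set.Ioc x y) := by
    rw [← measure_union (by exact Set.Iic_disjoint_Ioc le_rfl) measurableSet_Ioc,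
      Set.Iic_union_Ioc_eq_Iic hxy.le]
  have hfin := G_Iic_ne_top x
  unfold stdPhi
  rw [hsplit, ENNReal.toReal_add hfin (by finiteness)]
  have : 0 < ((G) (Set.Ioc x y)).toReal := ENNReal.toReal_pos hpos.ne' (by finiteness)
  linarith

lemma gauss_singleton (x : ℝ) : (G) {x} = 0 := by
  have habs := gaussianReal_absolutelyContinuous 0 (v := 1) (by norm_num)
  exact habs (by simp)

lemma stdPhi_neg (x : ℝ) : stdPhi (-x) = 1 - stdPhi x := by
  have hmap : (G).map (fun y => (-1 : ℝ) * y) = G := by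
    have h := gaussianReal_map_const_mul (μ := 0) (v := 1) (-1)
    rw [h]
    norm_num
  have h1 : (G) (Set.Iic (-x)) = (G) (Set.Ici x) := by
    conv_lhs => rw [← hmap]
    rw [Measure.map_apply (by fun_prop) measurableSet_Iic]
    congr 1
    ext y
    simp only [Set.mem_preimage, Set.mem_Iic, Set.mem_Ici]
    constructor <;> intro h <;> linarith
  have h2 : (G) (Set.Ici x) = (G) (Set.Iio x)ᶜ := by rw [Set.compl_Iio]
  have h3 : (G) (Set.Iio x) = (G) (Set.Iic x) := by
    rw [← Set.Iio_union_right (a := x), measure_union (by simp) (by simp), gauss_singleton]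
    simp
  have hprob : IsProbabilityMeasure (G) := inferInstance
  unfold stdPhi
  rw [h1, h2, measure_compl measurableSet_Iio (measure_ne_top _ _), h3, measure_univ,
    ENNReal.toReal_sub_of_le (prob_le_one (μ := G)) (by simp)]
  simp

lemma stdPhi_zero : stdPhi 0 = 1 / 2 := by
  have := stdPhi_neg 0
  rw [neg_zero] at this
  linarith

lemma stdPhi_le_one (x : ℝ) : stdPhi x ≤ 1 := by
  unfold stdPhi
  have hprob : IsProbabilityMeasure (G) := inferInstance
  calc ((G) (Set.Iic x)).toReal ≤ (1 : ℝ≥0∞).toReal :=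
        ENNReal.toReal_mono (by simp) prob_le_one
    _ = 1 := by simp

lemma stdPhi_tendsto_atTop : Filter.Tendsto stdPhi Filter.atTop (nhds 1) := by
  have hprob : IsProbabilityMeasure (G) := inferInstance
  have h := tendsto_measure_Iic_atTop (G)
  rw [measure_univ] at h
  have := (ENNReal.tendsto_toReal (by simp : (1:ℝ≥0∞) ≠ ⊤)).comp h
  exact this

lemma le_stdPhi_stdPhiInv {p : ℝ} (hp1 : 1 / 2 < p) (hp2 : p < 1) :
    p ≤ stdPhi (stdPhiInv p) := by
  set S := {x : ℝ | p ≤ stdPhi x} with hS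
  have hne : S.Nonempty := by
    have hev : ∀ᶠ x in Filter.atTop, p ≤ stdPhi x :=
      stdPhi_tendsto_atTop.eventually (eventually_ge_nhds hp2)
    rcases hev.exists with ⟨x, hx⟩
    exact ⟨x, hx⟩
  have hbdd : BddBelow S := by
    refine ⟨0, fun s hs => ?_⟩
    by_contra hlt
    push_neg at hlt
    have := stdPhi_strictMono hlt
    rw [stdPhi_zero] at this
    have : p < p := lt_of_le_of_lt hs (by linarith)
    exact lt_irrefl _ this
  set t := sInf S with ht
  -- continuity from above
  have hseq : Filter.Tendsto (fun n : ℕ => stdPhi (t + 1 / (n + 1))) Filter.atTop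
      (nhds (stdPhi t)) := by
    have hinter : (⋂ n : ℕ, Set.Iic (t + 1 / (n + 1))) = Set.Iic t := by
      ext x
      simp only [Set.mem_iInter, Set.mem_Iic]
      constructor
      · intro hx
        refine le_of_forall_pos_le_add fun δ hδ => ?_
        obtain ⟨n, hn⟩ := exists_nat_one_div_lt hδ
        calc x ≤ t + 1 / (n + 1) := hx n
          _ ≤ t + δ := by linarith
      · intro hx n
        have : (0:ℝ) < 1 / (n + 1) := by positivity
        linarith
    have hmeas := tendsto_measure_iInter_atTop (μ := G)
      (s := fun n : ℕ => Set.Iic (t + 1 / (n + 1)))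
      (fun n => measurableSet_Iic.nullMeasurableSet)
      (fun i j hij => by
        apply Set.Iic_subset_Iic.2
        have : (1:ℝ) / (j + 1) ≤ 1 / (i + 1) := by
          apply one_div_le_one_div_of_le (by positivity)
          exact_mod_cast by omega
        linarith)
      ⟨0, measure_ne_top _ _⟩
    rw [hinter] at hmeas
    have := (ENNReal.tendsto_toReal (measure_ne_top _ _)).comp hmeas
    exact this
  refine ge_of_tendsto hseq (Filter.Eventually.of_forall fun n => ?_)
  have hδ : (0:ℝ) < 1 / (n + 1) := by positivity
  obtain ⟨s, hsS, hst⟩ := Real.lt_sInf_add_pos hne hδ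
  calc p ≤ stdPhi s := hsS
    _ ≤ stdPhi (t + 1 / (n + 1)) := stdPhi_strictMono.monotone hst.le

lemma stdPhiInv_nonneg {p : ℝ} (hp1 : 1 / 2 < p) (hp2 : p < 1) : 0 ≤ stdPhiInv p := by
  have hne : {x : ℝ | p ≤ stdPhi x}.Nonempty := by
    have hev : ∀ᶠ x in Filter.atTop, p ≤ stdPhi x :=
      stdPhi_tendsto_atTop.eventually (eventually_ge_nhds hp2)
    rcases hev.exists with ⟨x, hx⟩
    exact ⟨x, hx⟩
  refine le_csInf hne fun s hs => ?_
  by_contra hlt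
  push_neg at hlt
  have h0 := stdPhi_strictMono hlt
  rw [stdPhi_zero] at h0
  have : p < p := lt_of_le_of_lt hs (by linarith)
  exact lt_irrefl _ this

lemma mix_Iic_toReal (ε : ℝ) (hε0 : 0 ≤ ε) (hε1 : ε ≤ 1) (μ H : Measure ℝ)
    [IsProbabilityMeasure μ] [IsProbabilityMeasure H] (c : ℝ) :
    ((mix ε μ H) (Set.Iic c)).toReal
      = (1 - ε) * (μ (Set.Iic c)).toReal + ε * (H (Set.Iic c)).toReal := by
  unfold mix
  rw [Measure.add_apply, Measure.smul_apply, Measure.smul_apply, smul_eq_mul, smul_eq_mul,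
    ENNReal.toReal_add (by finiteness) (by finiteness),
    ENNReal.toReal_mul, ENNReal.toReal_mul,
    ENNReal.toReal_ofReal (by linarith), ENNReal.toReal_ofReal hε0]

lemma key (ε a b : ℝ) (hε : ε ∈ Set.Ioo (0:ℝ) (1/2))
    (hab : 2 * stdPhiInv (1 / (2 * (1 - ε))) < b - a)
    (H₁ H₂ : Measure ℝ) (h₁ : IsProbabilityMeasure H₁) (h₂ : IsProbabilityMeasure H₂) :
    mix ε (gaussianReal a 1) H₁ ≠ mix ε (gaussianReal b 1) H₂ := by
  obtain ⟨hε0, hε12⟩ := hε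
  intro heq
  set p := 1 / (2 * (1 - ε)) with hp
  have hε1 : ε < 1 := by linarith
  have hp1 : 1 / 2 < p := by
    rw [hp]
    rw [div_lt_div_iff₀ (by norm_num) (by linarith)]
    linarith
  have hp2 : p < 1 := by
    rw [hp, div_lt_one (by linarith)]
    linarith
  set t := stdPhiInv p with htdef
  have hΦt : p ≤ stdPhi t := le_stdPhi_stdPhiInv hp1 hp2
  set c := (a + b) / 2 with hc
  have hca : t < c - a := by
    have : c - a = (b - a) / 2 := by ring
    rw [this]; linarith
  have hcb : c - b < -t := by
    have : c - b = -((b - a) / 2) := by ring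
    rw [this]; linarith
  have hA : p < stdPhi (c - a) := lt_of_le_of_lt hΦt (stdPhi_strictMono hca)
  have hB : stdPhi (c - b) < 1 - p := by
    calc stdPhi (c - b) < stdPhi (-t) := stdPhi_strictMono hcb
      _ = 1 - stdPhi t := stdPhi_neg t
      _ ≤ 1 - p := by linarith
  have key1 : stdPhi (c - a) = ((gaussianReal a 1) (Set.Iic c)).toReal := by
    rw [gauss_translate]; rfl
  have key2 : stdPhi (c - b) = ((gaussianReal b 1) (Set.Iic c)).toReal := by
    rw [gauss_translate]; rfl
  have hL := mix_Iic_toReal ε hε0.le hε1.le (gaussianReal a 1) H₁ c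
  have hR := mix_Iic_toReal ε hε0.le hε1.le (gaussianReal b 1) H₂ c
  rw [heq, hR] at hL
  have hH1 : 0 ≤ (H₁ (Set.Iic c)).toReal := ENNReal.toReal_nonneg
  have hH2 : (H₂ (Set.Iic c)).toReal ≤ 1 := by
    have := measure_mono (μ := H₂) (Set.subset_univ (Set.Iic c))
    rw [measure_univ] at this
    calc (H₂ (Set.Iic c)).toReal ≤ (1 : ℝ≥0∞).toReal := ENNReal.toReal_mono (by simp) this
      _ = 1 := by simp
  have hne : (1:ℝ) - ε ≠ 0 := by linarith
  have hhalf : (1 - ε) * p = 1 / 2 := by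
    rw [hp]; field_simp
  have hLlb : 1 / 2 < (1 - ε) * ((gaussianReal a 1) (Set.Iic c)).toReal
      + ε * (H₁ (Set.Iic c)).toReal := by
    have h1 : (1 - ε) * p < (1 - ε) * ((gaussianReal a 1) (Set.Iic c)).toReal := by
      apply mul_lt_mul_of_pos_left _ (by linarith)
      rw [← key1]; exact hA
    nlinarith
  have hRub : (1 - ε) * ((gaussianReal b 1) (Set.Iic c)).toReal
      + ε * (H₂ (Set.Iic c)).toReal < 1 / 2 := by
    have h1 : (1 - ε) * ((gaussianReal b 1) (Set.Iic c)).toReal < (1 - ε) * (1 - p) := by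
      apply mul_lt_mul_of_pos_left _ (by linarith)
      rw [← key2]; exact hB
    nlinarith
  linarith

end CorruptAux

/-- if the Gaussian means are more than `2 Φ⁻¹(1/(2(1-ε)))` apart, the
corruption neighbourhoods are disjoint. -/
theorem corruption_neighbourhoods_disjoint (ε mκ mη : ℝ)
    (hε : ε ∈ Set.Ioo (0 : ℝ) (1 / 2))
    (h : 2 * stdPhiInv (1 / (2 * (1 - ε))) < |mκ - mη|) :
    ∀ H₁ H₂ : Measure ℝ, IsProbabilityMeasure H₁ → IsProbabilityMeasure H₂ →
      mix ε (gaussianReal mκ 1) H₁ ≠ mix ε (gaussianReal mη 1) H₂ := by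
  intro H₁ H₂ h₁ h₂
  have hp1 : 1 / 2 < 1 / (2 * (1 - ε)) := by
    rw [div_lt_div_iff₀ (by norm_num) (by nlinarith [hε.1, hε.2])]
    nlinarith [hε.1, hε.2]
  have hp2 : 1 / (2 * (1 - ε)) < 1 := by
    rw [div_lt_one (by nlinarith [hε.1, hε.2])]
    nlinarith [hε.1, hε.2]
  rcases lt_trichotomy mκ mη with hlt | heqm | hgt
  · refine CorruptAux.key ε mκ mη hε ?_ H₁ H₂ h₁ h₂
    rw [abs_of_neg (by linarith : mκ - mη < 0)] at h
    linarith
  · exfalso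
    have ht := CorruptAux.stdPhiInv_nonneg hp1 hp2
    rw [heqm, sub_self, abs_zero] at h
    linarith
  · refine (CorruptAux.key ε mη mκ hε ?_ H₂ H₁ h₂ h₁).symm
    rw [abs_of_pos (by linarith : 0 < mκ - mη)] at h
    linarith
end
end

section
/- Let κ be a distribution on ℝ that is symmetric about its median and unimodal, with CDF F_κ, and let ε ∈ (0,1/2). Then for every distribution κ' in the ε-corruption neighbourhood of κ, |Med(κ') - Med(κ)| ≤ F_κ⁻¹(1/(2(1-ε))) - Med(κ). In particular for κ = N(m,1), |Med(κ') - m| ≤ Φ⁻¹(1/(2(1-ε))). -/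
open MeasureTheory ProbabilityTheory Real Set
open scoped ENNReal

noncomputable section

section AuxLemmas

open Filter

lemma aux_toReal_mix (ε : ℝ) (hε0 : 0 ≤ ε) (hε1 : ε ≤ 1) (κ H : Measure ℝ)
    [IsProbabilityMeasure κ] [IsProbabilityMeasure H] (s : Set ℝ) :
    ((mix ε κ H) s).toReal = (1 - ε) * (κ s).toReal + ε * (H s).toReal := by
  simp only [mix, Measure.add_apply, Measure.smul_apply, smul_eq_mul]
  rw [ENNReal.toReal_add (ENNReal.mul_ne_top ENNReal.ofReal_ne_top (measure_ne_top κ s))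
      (ENNReal.mul_ne_top ENNReal.ofReal_ne_top (measure_ne_top H s)),
    ENNReal.toReal_mul, ENNReal.toReal_mul,
    ENNReal.toReal_ofReal (by linarith), ENNReal.toReal_ofReal hε0]

lemma cdf_facts (μ : Measure ℝ) [IsProbabilityMeasure μ] {p : ℝ} (hp0 : 0 < p) (hp1 : p < 1) :
    {x : ℝ | p ≤ ProbabilityTheory.cdf μ x}.Nonempty ∧
      BddBelow {x : ℝ | p ≤ ProbabilityTheory.cdf μ x} ∧
      p ≤ ProbabilityTheory.cdf μ (sInf {x : ℝ | p ≤ ProbabilityTheory.cdf μ x}) := by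
  obtain ⟨x₁, hx₁⟩ : ∃ x, p ≤ ProbabilityTheory.cdf μ x :=
    ((ProbabilityTheory.tendsto_cdf_atTop μ).eventually (eventually_ge_nhds hp1)).exists
  obtain ⟨x₀, hx₀⟩ : ∃ x, ProbabilityTheory.cdf μ x < p :=
    ((ProbabilityTheory.tendsto_cdf_atBot μ).eventually (eventually_lt_nhds hp0)).exists
  have hbdd : BddBelow {x : ℝ | p ≤ ProbabilityTheory.cdf μ x} := by
    refine ⟨x₀, fun y hy => ?_⟩
    by_contra h
    exact absurd (le_trans hy (ProbabilityTheory.monotone_cdf μ (le_of_not_ge h)))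
      (not_le.mpr hx₀)
  have hne : {x : ℝ | p ≤ ProbabilityTheory.cdf μ x}.Nonempty := ⟨x₁, hx₁⟩
  refine ⟨hne, hbdd, ?_⟩
  set q := sInf {x : ℝ | p ≤ ProbabilityTheory.cdf μ x} with hq
  have hev : ∀ᶠ y in nhdsWithin q (Set.Ioi q), p ≤ ProbabilityTheory.cdf μ y := by
    filter_upwards [self_mem_nhdsWithin] with y hy
    obtain ⟨z, hz, hzy⟩ := exists_lt_of_csInf_lt hne hy
    exact le_trans hz (ProbabilityTheory.monotone_cdf μ hzy.le)
  have hc : Filter.Tendsto (ProbabilityTheory.cdf μ) (nhdsWithin q (Set.Ioi q))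
      (nhds (ProbabilityTheory.cdf μ q)) :=
    ((ProbabilityTheory.cdf μ).right_continuous q).mono_left
      (nhdsWithin_mono q Set.Ioi_subset_Ici_self)
  exact ge_of_tendsto hc hev

lemma reflect_Iic (f : ℝ → ℝ) (m : ℝ) (hsym : ∀ t, f (m + t) = f (m - t)) (t : ℝ) :
    (MeasureTheory.volume.withDensity fun x => ENNReal.ofReal (f x)) (Set.Iic (2 * m - t)) =
      (MeasureTheory.volume.withDensity fun x => ENNReal.ofReal (f x)) (Set.Ici t) := by
  have hg : ∀ x : ℝ, f (2 * m - x) = f x := by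
    intro x
    have h := hsym (m - x)
    rw [show m + (m - x) = 2 * m - x by ring, show m - (m - x) = x by ring] at h
    exact h
  rw [withDensity_apply _ measurableSet_Iic, withDensity_apply _ measurableSet_Ici,
    ← lintegral_indicator measurableSet_Iic, ← lintegral_indicator measurableSet_Ici]
  have hmp : MeasurePreserving (fun x : ℝ => 2 * m - x) volume volume :=
    MeasureTheory.Measure.measurePreserving_sub_left volume (2 * m)
  have heq := MeasurePreserving.lintegral_map_equiv
    ((Set.Iic (2 * m - t)).indicator fun x => ENNReal.ofReal (f x))
    (MeasurableEquiv.subLeft (2 * m)) hmp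
  rw [heq]
  refine lintegral_congr fun x => ?_
  have hcoe : (MeasurableEquiv.subLeft (2 * m)) x = 2 * m - x := rfl
  rw [hcoe]
  by_cases hx : t ≤ x
  · rw [Set.indicator_of_mem (show (2 * m - x) ∈ Set.Iic (2 * m - t) by
      simp only [Set.mem_Iic]; linarith), Set.indicator_of_mem (Set.mem_Ici.mpr hx), hg]
  · rw [Set.indicator_of_notMem (show (2 * m - x) ∉ Set.Iic (2 * m - t) by
      simp only [Set.mem_Iic, not_le]; push_neg at hx; linarith),
      Set.indicator_of_notMem (by simpa using hx)]

lemma mono_left (f : ℝ → ℝ) (m : ℝ) (hsym : ∀ t, f (m + t) = f (m - t))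
    (hmono : ∀ s t, m ≤ s → s ≤ t → f t ≤ f s) :
    ∀ a b, a ≤ b → b ≤ m → f a ≤ f b := by
  intro a b hab hbm
  have ha := hsym (m - a)
  rw [show m - (m - a) = a by ring] at ha
  have hb := hsym (m - b)
  rw [show m - (m - b) = b by ring] at hb
  have := hmono (m + (m - b)) (m + (m - a)) (by linarith) (by linarith)
  rw [ha, hb] at this
  exact this

lemma meas_Icc_pos (f : ℝ → ℝ) (a b : ℝ) (hab : a < b) (hc : 0 < f a)
    (hf : ∀ x ∈ Set.Icc a b, f a ≤ f x) :
    0 < (MeasureTheory.volume.withDensity fun x => ENNReal.ofReal (f x)) (Set.Icc a b) := by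
  rw [withDensity_apply _ measurableSet_Icc, ← lintegral_indicator measurableSet_Icc]
  have hle : (fun x => (Set.Icc a b).indicator (fun _ => ENNReal.ofReal (f a)) x) ≤
      fun x => (Set.Icc a b).indicator (fun x => ENNReal.ofReal (f x)) x := by
    intro x
    dsimp only
    by_cases hx : x ∈ Set.Icc a b
    · rw [Set.indicator_of_mem hx, Set.indicator_of_mem hx]
      exact ENNReal.ofReal_le_ofReal (hf x hx)
    · rw [Set.indicator_of_notMem hx, Set.indicator_of_notMem hx]
  calc (0 : ℝ≥0∞) < ENNReal.ofReal (f a) * volume (Set.Icc a b) := by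
        apply ENNReal.mul_pos
        · simpa using (ENNReal.ofReal_pos.mpr hc).ne'
        · simp [Real.volume_Icc, hab.le]
          linarith
    _ = ∫⁻ x, (Set.Icc a b).indicator (fun _ => ENNReal.ofReal (f a)) x ∂volume := by
        rw [lintegral_indicator_const measurableSet_Icc]
    _ ≤ _ := lintegral_mono hle

lemma meas_Iic_zero (f : ℝ → ℝ) (y : ℝ) (hf : ∀ x ≤ y, f x ≤ 0) :
    (MeasureTheory.volume.withDensity fun x => ENNReal.ofReal (f x)) (Set.Iic y) = 0 := by
  rw [withDensity_apply _ measurableSet_Iic, ← lintegral_indicator measurableSet_Iic]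
  have h0 : ∀ x, (Set.Iic y).indicator (fun x => ENNReal.ofReal (f x)) x = 0 := by
    intro x
    by_cases hx : x ∈ Set.Iic y
    · rw [Set.indicator_of_mem hx]
      exact ENNReal.ofReal_eq_zero.mpr (hf x hx)
    · exact Set.indicator_of_notMem hx _
  rw [lintegral_congr h0, lintegral_zero]

lemma key_median_bias (ε : ℝ) (hε : ε ∈ Set.Ioo (0:ℝ) (1/2)) (f : ℝ → ℝ) (κ : Measure ℝ)
    (hκ : κ = MeasureTheory.volume.withDensity (fun x => ENNReal.ofReal (f x)))
    (hprob : IsProbabilityMeasure κ)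
    (hsym : ∀ t, f (measMed κ + t) = f (measMed κ - t))
    (hmono : ∀ s t, measMed κ ≤ s → s ≤ t → f t ≤ f s)
    (H : Measure ℝ) (hH : IsProbabilityMeasure H) :
    |measMed (mix ε κ H) - measMed κ| ≤ quantile κ (1 / (2 * (1 - ε))) - measMed κ := by
  obtain ⟨hε0, hε2⟩ := hε
  have h1ε : 0 < 1 - ε := by linarith
  set p : ℝ := 1 / (2 * (1 - ε)) with hp
  have hpe : (1 - ε) * p = 1 / 2 := by rw [hp]; field_simp
  have hp_half : 1 / 2 < p := by
    rw [hp, div_lt_div_iff₀ (by norm_num) (by linarith)]; nlinarith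
  have hp1 : p < 1 := by rw [hp, div_lt_one (by linarith)]; linarith
  have hp0 : 0 < p := by linarith
  set m := measMed κ with hm
  have hset : ∀ r : ℝ, {x : ℝ | r ≤ (κ (Set.Iic x)).toReal}
      = {x : ℝ | r ≤ ProbabilityTheory.cdf κ x} := by
    intro r; ext x; simp [ProbabilityTheory.cdf_eq_real, measureReal_def]
  have hq_def : quantile κ p = sInf {x : ℝ | p ≤ ProbabilityTheory.cdf κ x} := by
    rw [quantile, hset]
  obtain ⟨hSne, hSbdd, hqF⟩ := cdf_facts κ hp0 hp1
  set q := sInf {x : ℝ | p ≤ ProbabilityTheory.cdf κ x} with hqd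
  obtain ⟨hTne, hTbdd, -⟩ := cdf_facts κ (by norm_num : (0:ℝ) < 1/2) (by norm_num)
  have hmq : m ≤ q := by
    rw [hm, measMed, hset]
    exact csInf_le_csInf hTbdd ⟨q, hqF⟩ (fun x hx => le_trans hp_half.le hx)
  -- no atoms
  have hatom : ∀ a : ℝ, κ {a} = 0 := fun a => by
    rw [hκ]; exact withDensity_absolutelyContinuous _ _ (by simp)
  have hIio : κ (Set.Iio q) = κ (Set.Iic q) := by
    refine le_antisymm (measure_mono Set.Iio_subset_Iic_self) ?_
    calc κ (Set.Iic q) ≤ κ (Set.Iio q ∪ {q}) := by rw [Set.Iio_union_right]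
      _ ≤ κ (Set.Iio q) + κ {q} := measure_union_le _ _
      _ = κ (Set.Iio q) := by rw [hatom q, add_zero]
  have hrefl : ProbabilityTheory.cdf κ (2 * m - q) = 1 - ProbabilityTheory.cdf κ q := by
    have h1 : κ (Set.Iic (2 * m - q)) = κ (Set.Ici q) := by
      rw [hκ]; exact reflect_Iic f m hsym q
    have h2 : κ (Set.Ici q) = 1 - κ (Set.Iio q) := by
      rw [← Set.compl_Iio, prob_compl_eq_one_sub measurableSet_Iio]
    rw [ProbabilityTheory.cdf_eq_real, ProbabilityTheory.cdf_eq_real, measureReal_def,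
      measureReal_def, h1, h2, hIio,
      ENNReal.toReal_sub_of_le prob_le_one ENNReal.one_ne_top, ENNReal.toReal_one]
  have hrq : ProbabilityTheory.cdf κ (2 * m - q) ≤ 1 - p := by rw [hrefl]; linarith
  set ν := mix ε κ H with hν
  have hHle : ∀ s : Set ℝ, (H s).toReal ≤ 1 := fun s => by
    have h := prob_le_one (μ := H) (s := s)
    simpa using ENNReal.toReal_mono ENNReal.one_ne_top h
  have hqin : (1:ℝ)/2 ≤ (ν (Set.Iic q)).toReal := by
    rw [hν, aux_toReal_mix ε hε0.le (by linarith) κ H]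
    have hq2 : p ≤ (κ (Set.Iic q)).toReal := by
      rw [← measureReal_def, ← ProbabilityTheory.cdf_eq_real]; exact hqF
    nlinarith [ENNReal.toReal_nonneg (a := H (Set.Iic q))]
  have hlow : ∀ x : ℝ, (1:ℝ)/2 ≤ (ν (Set.Iic x)).toReal → 2 * m - q ≤ x := by
    intro x hx
    by_contra hlt
    push_neg at hlt
    rw [hν, aux_toReal_mix ε hε0.le (by linarith) κ H] at hx
    by_cases hz : κ (Set.Ioc x (2 * m - q)) = 0
    · set y := (x + (2 * m - q)) / 2 with hy
      have hxy : x < y := by rw [hy]; linarith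
      have hym : y < 2 * m - q := by rw [hy]; linarith
      by_cases hfy : f y ≤ 0
      · have h0 : κ (Set.Iic y) = 0 := by
          rw [hκ]
          refine meas_Iic_zero f y (fun z hz' => le_trans ?_ hfy)
          exact mono_left f m hsym
            hmono z y hz' (by linarith)
        have hx0 : (κ (Set.Iic x)).toReal = 0 := by
          have hle0 : κ (Set.Iic x) ≤ 0 := h0 ▸ measure_mono (Set.Iic_subset_Iic.mpr hxy.le)
          simp [le_antisymm hle0 zero_le]
        rw [hx0] at hx
        nlinarith [hHle (Set.Iic x)]
      · push_neg at hfy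
        refine absurd hz (LT.lt.ne' (lt_of_lt_of_le ?_ (measure_mono
          (show Set.Icc y (2 * m - q) ⊆ Set.Ioc x (2 * m - q) by
            intro z hz'; exact ⟨lt_of_lt_of_le hxy hz'.1, hz'.2⟩))))
        rw [hκ]
        refine meas_Icc_pos f y (2 * m - q) hym hfy (fun z hz' => ?_)
        exact mono_left f m hsym
          hmono y z hz'.1 (by linarith [hz'.2])
    · have hdisj : Disjoint (Set.Iic x) (Set.Ioc x (2 * m - q)) := by
        rw [Set.disjoint_left]
        intro z hz1 hz2
        exact absurd hz1 (not_le.mpr hz2.1)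
      have hsplit : κ (Set.Iic (2 * m - q)) = κ (Set.Iic x) + κ (Set.Ioc x (2 * m - q)) := by
        rw [← measure_union hdisj measurableSet_Ioc, Set.Iic_union_Ioc_eq_Iic hlt.le]
      have hlt' : (κ (Set.Iic x)).toReal < (κ (Set.Iic (2 * m - q))).toReal := by
        rw [hsplit, ENNReal.toReal_add (measure_ne_top κ _) (measure_ne_top κ _)]
        have hpos : 0 < (κ (Set.Ioc x (2 * m - q))).toReal :=
          ENNReal.toReal_pos hz (measure_ne_top κ _)
        linarith
      have h2 : (κ (Set.Iic x)).toReal < 1 - p := by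
        refine lt_of_lt_of_le hlt' ?_
        rw [← measureReal_def, ← ProbabilityTheory.cdf_eq_real]
        exact hrq
      nlinarith [hHle (Set.Iic x), mul_lt_mul_of_pos_left h2 h1ε]
  have hub : measMed ν ≤ q := csInf_le ⟨2 * m - q, fun z hz => hlow z hz⟩ hqin
  have hlb2 : 2 * m - q ≤ measMed ν := le_csInf ⟨q, hqin⟩ (fun z hz => hlow z hz)
  rw [hq_def]
  rw [abs_le]
  constructor <;> [linarith; linarith]

lemma gauss_f_eq (m : ℝ) : gaussianReal m 1 = MeasureTheory.volume.withDensity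
    (fun x => ENNReal.ofReal (gaussianPDFReal m 1 x)) := by
  rw [gaussianReal_of_var_ne_zero m one_ne_zero]; rfl

lemma gauss_sym (m : ℝ) : ∀ t, gaussianPDFReal m 1 (m + t) = gaussianPDFReal m 1 (m - t) := by
  intro t
  simp only [gaussianPDFReal]
  ring_nf

lemma gauss_mono (m : ℝ) :
    ∀ s t, m ≤ s → s ≤ t → gaussianPDFReal m 1 t ≤ gaussianPDFReal m 1 s := by
  intro s t hms hst
  simp only [gaussianPDFReal]
  apply mul_le_mul_of_nonneg_left _ (inv_nonneg.mpr (Real.sqrt_nonneg _))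
  apply Real.exp_le_exp.mpr
  simp only [NNReal.coe_one, mul_one]
  rw [div_le_div_iff₀ (by norm_num) (by norm_num)]
  nlinarith

lemma measMed_gauss (m : ℝ) : measMed (gaussianReal m 1) = m := by
  have hatom : ∀ a : ℝ, gaussianReal m 1 {a} = 0 := fun a => by
    rw [gauss_f_eq m]; exact withDensity_absolutelyContinuous _ _ (by simp)
  have hrefl : gaussianReal m 1 (Set.Iic m) = gaussianReal m 1 (Set.Ici m) := by
    have h := reflect_Iic (gaussianPDFReal m 1) m (gauss_sym m) m
    rw [show 2 * m - m = m by ring] at h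
    rw [gauss_f_eq m]
    exact h
  have hIoi : gaussianReal m 1 (Set.Ici m) = gaussianReal m 1 (Set.Ioi m) := by
    refine le_antisymm ?_ (measure_mono Set.Ioi_subset_Ici_self)
    calc gaussianReal m 1 (Set.Ici m) ≤ gaussianReal m 1 ({m} ∪ Set.Ioi m) := by
          refine measure_mono (fun z hz => ?_)
          rcases eq_or_lt_of_le (Set.mem_Ici.mp hz) with h | h
          · exact Or.inl (by simp [← h])
          · exact Or.inr h
      _ ≤ gaussianReal m 1 {m} + gaussianReal m 1 (Set.Ioi m) := measure_union_le _ _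
      _ = gaussianReal m 1 (Set.Ioi m) := by rw [hatom m, zero_add]
  have hsum : (gaussianReal m 1 (Set.Iic m)).toReal + (gaussianReal m 1 (Set.Ioi m)).toReal
      = 1 := by
    rw [← ENNReal.toReal_add (measure_ne_top _ _) (measure_ne_top _ _)]
    rw [show Set.Ioi m = (Set.Iic m)ᶜ by simp, measure_add_measure_compl measurableSet_Iic]
    simp
  have hhalf : (gaussianReal m 1 (Set.Iic m)).toReal = 1 / 2 := by
    rw [hrefl, hIoi] at hsum ⊢
    linarith
  have hlt : ∀ x : ℝ, x < m → (gaussianReal m 1 (Set.Iic x)).toReal < 1 / 2 := by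
    intro x hx
    set y := (x + m) / 2 with hy
    have hxy : x < y := by rw [hy]; linarith
    have hym : y < m := by rw [hy]; linarith
    have hpos : 0 < gaussianReal m 1 (Set.Ioc x m) := by
      refine lt_of_lt_of_le ?_ (measure_mono
        (show Set.Icc y m ⊆ Set.Ioc x m from fun z hz => ⟨lt_of_lt_of_le hxy hz.1, hz.2⟩))
      rw [gauss_f_eq m]
      refine meas_Icc_pos (gaussianPDFReal m 1) y m hym
        (gaussianPDFReal_pos m 1 y one_ne_zero) (fun z hz => ?_)
      exact mono_left (gaussianPDFReal m 1) m (gauss_sym m) (gauss_mono m) y z hz.1 hz.2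
    have hdisj : Disjoint (Set.Iic x) (Set.Ioc x m) := by
      rw [Set.disjoint_left]; intro z hz1 hz2; exact absurd hz1 (not_le.mpr hz2.1)
    have hsplit : gaussianReal m 1 (Set.Iic m)
        = gaussianReal m 1 (Set.Iic x) + gaussianReal m 1 (Set.Ioc x m) := by
      rw [← measure_union hdisj measurableSet_Ioc, Set.Iic_union_Ioc_eq_Iic hx.le]
    have := hhalf
    rw [hsplit, ENNReal.toReal_add (measure_ne_top _ _) (measure_ne_top _ _)] at this
    have hpos' : 0 < (gaussianReal m 1 (Set.Ioc x m)).toReal :=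
      ENNReal.toReal_pos hpos.ne' (measure_ne_top _ _)
    linarith
  rw [measMed]
  refine le_antisymm (csInf_le ⟨m, fun z hz => ?_⟩ (by simp [hhalf]))
    (le_csInf ⟨m, by simp [hhalf]⟩ (fun z hz => ?_))
  · by_contra h
    push_neg at h
    exact absurd hz (not_le.mpr (hlt z h))
  · by_contra h
    push_neg at h
    exact absurd hz (not_le.mpr (hlt z h))

lemma quantile_gauss (m p : ℝ) (hp0 : 0 < p) (hp1 : p < 1) :
    quantile (gaussianReal m 1) p = m + stdPhiInv p := by
  have hmap : ∀ x : ℝ, gaussianReal m 1 (Set.Iic x) = gaussianReal 0 1 (Set.Iic (x - m)) := by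
    intro x
    have h := gaussianReal_map_add_const (μ := 0) (v := 1) m
    rw [zero_add] at h
    rw [← h, Measure.map_apply (measurable_add_const m) measurableSet_Iic]
    congr 1
    ext y
    simp [Set.mem_Iic, le_sub_iff_add_le]
  have hset : {x : ℝ | p ≤ ((gaussianReal m 1) (Set.Iic x)).toReal} =
      (fun y => y + m) '' {y : ℝ | p ≤ stdPhi y} := by
    ext x
    simp only [Set.mem_setOf_eq, Set.mem_image]
    constructor
    · intro hx
      refine ⟨x - m, ?_, by ring⟩
      rw [hmap] at hx
      exact hx
    · rintro ⟨y, hy, rfl⟩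
      rw [hmap, add_sub_cancel_right]
      exact hy
  have hstd : {y : ℝ | p ≤ stdPhi y}
      = {y : ℝ | p ≤ ProbabilityTheory.cdf (gaussianReal 0 1) y} := by
    ext y; simp [stdPhi, ProbabilityTheory.cdf_eq_real, measureReal_def]
  obtain ⟨hne, hbdd, -⟩ := cdf_facts (gaussianReal 0 1) hp0 hp1
  rw [← hstd] at hne hbdd
  have hmono : Monotone (fun y : ℝ => y + m) := fun a b h => add_le_add_left h m
  have himg := hmono.map_csInf_of_continuousAt
    (Continuous.continuousAt (continuous_add_right m)) hne hbdd
  rw [quantile, hset, ← himg, stdPhiInv]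
  ring

end AuxLemmas

/-- bias of the median over a corruption neighbourhood of a symmetric
unimodal distribution, and the Gaussian special case. -/
theorem median_bias_corruption_neighbourhood (ε : ℝ) (hε : ε ∈ Set.Ioo (0 : ℝ) (1 / 2)) :
    (∀ (f : ℝ → ℝ) (κ : Measure ℝ),
      κ = MeasureTheory.volume.withDensity (fun x => ENNReal.ofReal (f x)) →
      IsProbabilityMeasure κ →
      (∀ t : ℝ, f (measMed κ + t) = f (measMed κ - t)) →
      (∀ s t : ℝ, measMed κ ≤ s → s ≤ t → f t ≤ f s) →
      ∀ H : Measure ℝ, IsProbabilityMeasure H →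
        |measMed (mix ε κ H) - measMed κ| ≤
          quantile κ (1 / (2 * (1 - ε))) - measMed κ) ∧
    (∀ (m : ℝ) (H : Measure ℝ), IsProbabilityMeasure H →
      |measMed (mix ε (gaussianReal m 1) H) - m| ≤ stdPhiInv (1 / (2 * (1 - ε)))) := by
  obtain ⟨hε0, hε2⟩ := hε
  constructor
  · intro f κ hκ hprob hsym hmono H hH
    exact key_median_bias ε ⟨hε0, hε2⟩ f κ hκ hprob hsym hmono H hH
  · intro m H hH
    have hp0 : (0:ℝ) < 1 / (2 * (1 - ε)) := by apply div_pos one_pos; linarith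
    have hp1 : 1 / (2 * (1 - ε)) < 1 := by
      rw [div_lt_one (by linarith)]; linarith
    have h1 := key_median_bias ε ⟨hε0, hε2⟩ (gaussianPDFReal m 1) (gaussianReal m 1)
      (gauss_f_eq m) inferInstance
      (by rw [measMed_gauss]; exact gauss_sym m)
      (by rw [measMed_gauss]; exact gauss_mono m) H hH
    rw [measMed_gauss, quantile_gauss m _ hp0 hp1] at h1
    have : m + stdPhiInv (1 / (2 * (1 - ε))) - m = stdPhiInv (1 / (2 * (1 - ε))) := by ring
    rwa [this] at h1
end
end

section
/- Let ε ∈ (0,1/2), let η, κ be probability distributions on ℝ, and let H₁, H₂ be the optimal corruption pair defined implicitly by: d(η ⊙_ε H₁)(x) = (1-ε)·dη(x) if (dη/dκ)(x) ≥ c₁ and = c₁(1-ε)·dκ(x) otherwise; and d(κ ⊙_ε H₂)(x) = (1-ε)·dκ(x) if (dη/dκ)(x) ≤ 1/c₂ and = c₂(1-ε)·dη(x) otherwise, with c₁, c₂ normalisation constants satisfying 0 ≤ c₂ ≤ 1/c₁. Then (H₁, H₂) minimizes KL(η ⊙_ε H, κ ⊙_ε H') over all pairs of probability distributions (H, H')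 on ℝ. -/
open MeasureTheory ProbabilityTheory Real Set
open scoped ENNReal

noncomputable section

private lemma ennreal_mul_max (c a b : ℝ≥0∞) : c * max a b = max (c * a) (c * b) := by
  rcases le_total a b with h | h
  · rw [max_eq_right h, max_eq_right (mul_le_mul_right h c)]
  · rw [max_eq_left h, max_eq_left (mul_le_mul_right h c)]

private lemma ennreal_max_split (a b : ℝ≥0∞) : max a b = a + (b - a) := by
  rcases le_total b a with h | h
  · rw [max_eq_left h, tsub_eq_zero_of_le h, add_zero]
  · rw [max_eq_right h, add_tsub_cancel_of_le h]

private lemma integrable_of_bound {μ : Measure ℝ} [IsFiniteMeasure μ] {L : ℝ → ℝ}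
    (hL : Measurable L) {B : ℝ} (hB : ∀ x, |L x| ≤ B) : Integrable L μ :=
  Integrable.mono' (integrable_const B) hL.aestronglyMeasurable
    (Filter.Eventually.of_forall fun x => by simpa using hB x)

/-- optimality of the Huber corruption pair `(H₁, H₂)`. -/
theorem huber_pair_optimal (ε : ℝ) (hε : ε ∈ Set.Ioo (0 : ℝ) (1 / 2))
    (η κ H₁ H₂ : Measure ℝ) (c₁ c₂ : ℝ)
    (hη : IsProbabilityMeasure η) (hκ : IsProbabilityMeasure κ)
    (hH₁ : IsProbabilityMeasure H₁) (hH₂ : IsProbabilityMeasure H₂)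
    (hc₁ : 0 ≤ c₁) (hc₂ : 0 ≤ c₂) (hcc : c₁ * c₂ ≤ 1)
    (hmix₁ : mix ε η H₁ =
      (η + κ).withDensity (fun x =>
        if ENNReal.ofReal c₁ * κ.rnDeriv (η + κ) x ≤ η.rnDeriv (η + κ) x then
          ENNReal.ofReal (1 - ε) * η.rnDeriv (η + κ) x
        else ENNReal.ofReal (c₁ * (1 - ε)) * κ.rnDeriv (η + κ) x))
    (hmix₂ : mix ε κ H₂ =
      (η + κ).withDensity (fun x =>
        if ENNReal.ofReal c₂ * η.rnDeriv (η + κ) x ≤ κ.rnDeriv (η + κ) x then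
          ENNReal.ofReal (1 - ε) * κ.rnDeriv (η + κ) x
        else ENNReal.ofReal (c₂ * (1 - ε)) * η.rnDeriv (η + κ) x)) :
    ∀ H H' : Measure ℝ, IsProbabilityMeasure H → IsProbabilityMeasure H' →
      KLdiv (mix ε η H₁) (mix ε κ H₂) ≤ KLdiv (mix ε η H) (mix ε κ H') := by
  obtain ⟨hε0, hε2⟩ := hε
  intro H H' hH hH'
  haveI := hη; haveI := hκ; haveI := hH₁; haveI := hH₂; haveI := hH; haveI := hH'
  have hε1 : (0:ℝ) < 1 - ε := by linarith
  classical
  set e1 : ℝ≥0∞ := ENNReal.ofReal (1 - ε) with he1def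
  set eε : ℝ≥0∞ := ENNReal.ofReal ε with heεdef
  have he1_ne : e1 ≠ 0 := by
    rw [he1def]
    simp only [ne_eq, ENNReal.ofReal_eq_zero, not_le]
    linarith
  have he1_top : e1 ≠ ⊤ := ENNReal.ofReal_ne_top
  have heε_top : eε ≠ ⊤ := ENNReal.ofReal_ne_top
  have hsum : e1 + eε = 1 := by
    rw [he1def, heεdef, ← ENNReal.ofReal_add (by linarith) (by linarith)]
    norm_num
  have heε_eq : eε = 1 - e1 := ENNReal.eq_sub_of_add_eq he1_top (by rw [add_comm]; exact hsum)
  have he1tr : e1.toReal = 1 - ε := by rw [he1def]; exact ENNReal.toReal_ofReal (by linarith)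
  have heεtr : eε.toReal = ε := by rw [heεdef]; exact ENNReal.toReal_ofReal hε0.le
  -- masses of mixtures
  have hmassmix : ∀ (μ ρm : Measure ℝ), IsProbabilityMeasure μ → IsProbabilityMeasure ρm →
      (mix ε μ ρm) Set.univ = 1 := by
    intro μ ρm h1 h2
    haveI := h1; haveI := h2
    simp only [mix, Measure.add_apply, Measure.smul_apply, smul_eq_mul, measure_univ, mul_one]
    rw [← he1def, ← heεdef]
    exact hsum
  haveI hPfin : IsFiniteMeasure (mix ε η H₁) :=
    ⟨by rw [hmassmix η H₁ hη hH₁]; exact ENNReal.one_lt_top⟩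
  haveI hQfin : IsFiniteMeasure (mix ε κ H₂) :=
    ⟨by rw [hmassmix κ H₂ hκ hH₂]; exact ENNReal.one_lt_top⟩
  haveI hPfin' : IsFiniteMeasure (mix ε η H) :=
    ⟨by rw [hmassmix η H hη hH]; exact ENNReal.one_lt_top⟩
  haveI hQfin' : IsFiniteMeasure (mix ε κ H') :=
    ⟨by rw [hmassmix κ H' hκ hH']; exact ENNReal.one_lt_top⟩
  set ν : Measure ℝ := η + κ with hνdef
  haveI : IsFiniteMeasure ν := by rw [hνdef]; infer_instance
  have hην : η ≪ ν := Measure.absolutelyContinuous_of_le (Measure.le_add_right le_rfl)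
  have hκν : κ ≪ ν := Measure.absolutelyContinuous_of_le (Measure.le_add_left le_rfl)
  set f : ℝ → ℝ≥0∞ := η.rnDeriv ν with hfdef
  set g : ℝ → ℝ≥0∞ := κ.rnDeriv ν with hgdef
  have hfm : Measurable f := Measure.measurable_rnDeriv η ν
  have hgm : Measurable g := Measure.measurable_rnDeriv κ ν
  have hfg1 : ∀ᵐ x ∂ν, f x + g x = 1 := by
    have h2 : ν.rnDeriv ν =ᵐ[ν] fun x => f x + g x := Measure.rnDeriv_add η κ ν
    filter_upwards [Measure.rnDeriv_self ν, h2] with x h1 h2'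
    rw [← h2', h1]
  set F : ℝ → ℝ≥0∞ := fun x => if f x + g x = 1 then f x else 1 / 2 with hFdef
  set G : ℝ → ℝ≥0∞ := fun x => if f x + g x = 1 then g x else 1 / 2 with hGdef
  have hSm : MeasurableSet {x : ℝ | f x + g x = 1} :=
    (hfm.add hgm) (measurableSet_singleton 1)
  have hFm : Measurable F := Measurable.ite hSm hfm measurable_const
  have hGm : Measurable G := Measurable.ite hSm hgm measurable_const
  have hFG1 : ∀ x, F x + G x = 1 := by
    intro x
    simp only [hFdef, hGdef]
    split_ifs with h
    · exact h
    · exact ENNReal.add_halves 1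
  have hF1 : ∀ x, F x ≤ 1 := fun x => le_trans le_self_add (hFG1 x).le
  have hG1 : ∀ x, G x ≤ 1 := fun x => le_trans le_add_self (hFG1 x).le
  have hFtop : ∀ x, F x ≠ ⊤ := fun x => ne_top_of_le_ne_top ENNReal.one_ne_top (hF1 x)
  have hGtop : ∀ x, G x ≠ ⊤ := fun x => ne_top_of_le_ne_top ENNReal.one_ne_top (hG1 x)
  have hFf : F =ᵐ[ν] f := by
    filter_upwards [hfg1] with x hx
    simp only [hFdef]
    rw [if_pos hx]
  have hGg : G =ᵐ[ν] g := by
    filter_upwards [hfg1] with x hx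
    simp only [hGdef]
    rw [if_pos hx]
  have hηF : ν.withDensity F = η := by
    rw [withDensity_congr_ae hFf]; exact Measure.withDensity_rnDeriv_eq η ν hην
  have hκG : ν.withDensity G = κ := by
    rw [withDensity_congr_ae hGg]; exact Measure.withDensity_rnDeriv_eq κ ν hκν
  have hlintF : ∫⁻ x, F x ∂ν = 1 := by
    have h := congrArg (fun m : Measure ℝ => m Set.univ) hηF
    simpa only [withDensity_apply _ MeasurableSet.univ, setLIntegral_univ, measure_univ] using h
  have hlintG : ∫⁻ x, G x ∂ν = 1 := by
    have h := congrArg (fun m : Measure ℝ => m Set.univ) hκG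
    simpa only [withDensity_apply _ MeasurableSet.univ, setLIntegral_univ, measure_univ] using h
  set C₁ : ℝ≥0∞ := ENNReal.ofReal c₁ with hC1def
  set C₂ : ℝ≥0∞ := ENNReal.ofReal c₂ with hC2def
  have hC1top : C₁ ≠ ⊤ := ENNReal.ofReal_ne_top
  have hC2top : C₂ ≠ ⊤ := ENNReal.ofReal_ne_top
  have hCC : C₁ * C₂ ≤ 1 := by
    rw [hC1def, hC2def, ← ENNReal.ofReal_mul hc₁]
    exact ENNReal.ofReal_le_one.mpr hcc
  set d₁ : ℝ → ℝ≥0∞ := fun x => e1 * max (F x) (C₁ * G x) with hd1def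
  set d₂ : ℝ → ℝ≥0∞ := fun x => e1 * max (G x) (C₂ * F x) with hd2def
  have hm1 : Measurable fun x => max (F x) (C₁ * G x) := hFm.max (hGm.const_mul C₁)
  have hm2 : Measurable fun x => max (G x) (C₂ * F x) := hGm.max (hFm.const_mul C₂)
  have hd1m : Measurable d₁ := hm1.const_mul e1
  have hd2m : Measurable d₂ := hm2.const_mul e1
  have hP₀ : mix ε η H₁ = ν.withDensity d₁ := by
    rw [hmix₁]
    refine withDensity_congr_ae ?_
    filter_upwards [hfg1] with x hx
    have hFx : F x = f x := by simp only [hFdef]; rw [if_pos hx]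
    have hGx : G x = g x := by simp only [hGdef]; rw [if_pos hx]
    simp only [hd1def, hFx, hGx]
    by_cases h : C₁ * g x ≤ f x
    · rw [if_pos h, max_eq_left h]
    · rw [if_neg h, max_eq_right (le_of_not_ge h), ENNReal.ofReal_mul hc₁, ← hC1def, ← he1def]
      ring
  have hQ₀ : mix ε κ H₂ = ν.withDensity d₂ := by
    rw [hmix₂]
    refine withDensity_congr_ae ?_
    filter_upwards [hfg1] with x hx
    have hFx : F x = f x := by simp only [hFdef]; rw [if_pos hx]
    have hGx : G x = g x := by simp only [hGdef]; rw [if_pos hx]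
    simp only [hd2def, hFx, hGx]
    by_cases h : C₂ * f x ≤ g x
    · rw [if_pos h, max_eq_left h]
    · rw [if_neg h, max_eq_right (le_of_not_ge h), ENNReal.ofReal_mul hc₂, ← hC2def, ← he1def]
      ring
  have hmass1 : ∫⁻ x, d₁ x ∂ν = 1 := by
    have h := hmassmix η H₁ hη hH₁
    rwa [hP₀, withDensity_apply _ MeasurableSet.univ, setLIntegral_univ] at h
  have hmass2 : ∫⁻ x, d₂ x ∂ν = 1 := by
    have h := hmassmix κ H₂ hκ hH₂
    rwa [hQ₀, withDensity_apply _ MeasurableSet.univ, setLIntegral_univ] at h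
  have hM1 : ∫⁻ x, max (F x) (C₁ * G x) ∂ν = e1⁻¹ := by
    have h := hmass1
    simp only [hd1def] at h
    rw [lintegral_const_mul e1 hm1] at h
    calc ∫⁻ x, max (F x) (C₁ * G x) ∂ν
        = e1⁻¹ * (e1 * ∫⁻ x, max (F x) (C₁ * G x) ∂ν) := by
          rw [← mul_assoc, ENNReal.inv_mul_cancel he1_ne he1_top, one_mul]
      _ = e1⁻¹ := by rw [h, mul_one]
  have hM2 : ∫⁻ x, max (G x) (C₂ * F x) ∂ν = e1⁻¹ := by
    have h := hmass2
    simp only [hd2def] at h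
    rw [lintegral_const_mul e1 hm2] at h
    calc ∫⁻ x, max (G x) (C₂ * F x) ∂ν
        = e1⁻¹ * (e1 * ∫⁻ x, max (G x) (C₂ * F x) ∂ν) := by
          rw [← mul_assoc, ENNReal.inv_mul_cancel he1_ne he1_top, one_mul]
      _ = e1⁻¹ := by rw [h, mul_one]
  have hE1 : ∫⁻ x, (C₁ * G x - F x) ∂ν = e1⁻¹ - 1 := by
    have h : ∫⁻ x, max (F x) (C₁ * G x) ∂ν = ∫⁻ x, (F x + (C₁ * G x - F x)) ∂ν :=
      lintegral_congr fun x => ennreal_max_split _ _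
    rw [hM1, lintegral_add_left hFm, hlintF] at h
    rw [h, ENNReal.add_sub_cancel_left ENNReal.one_ne_top]
  have hE2 : ∫⁻ x, (C₂ * F x - G x) ∂ν = e1⁻¹ - 1 := by
    have h : ∫⁻ x, max (G x) (C₂ * F x) ∂ν = ∫⁻ x, (G x + (C₂ * F x - G x)) ∂ν :=
      lintegral_congr fun x => ennreal_max_split _ _
    rw [hM2, lintegral_add_left hGm, hlintG] at h
    rw [h, ENNReal.add_sub_cancel_left ENNReal.one_ne_top]
  have he1lt : e1 < 1 := by rw [he1def]; exact ENNReal.ofReal_lt_one.mpr (by linarith)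
  have hc1pos : 0 < c₁ := by
    rcases lt_or_eq_of_le hc₁ with h | h
    · exact h
    exfalso
    have hC1z : C₁ = 0 := by rw [hC1def, ← h, ENNReal.ofReal_zero]
    rw [hC1z] at hE1
    simp only [zero_mul, zero_tsub, lintegral_zero] at hE1
    have h2 : e1⁻¹ ≤ 1 := tsub_eq_zero_iff_le.mp hE1.symm
    exact absurd (ENNReal.inv_le_one.mp h2) (not_le.mpr he1lt)
  have hc2pos : 0 < c₂ := by
    rcases lt_or_eq_of_le hc₂ with h | h
    · exact h
    exfalso
    have hC2z : C₂ = 0 := by rw [hC2def, ← h, ENNReal.ofReal_zero]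
    rw [hC2z] at hE2
    simp only [zero_mul, zero_tsub, lintegral_zero] at hE2
    have h2 : e1⁻¹ ≤ 1 := tsub_eq_zero_iff_le.mp hE2.symm
    exact absurd (ENNReal.inv_le_one.mp h2) (not_le.mpr he1lt)
  have hC1ne : C₁ ≠ 0 := by
    rw [hC1def]
    simp only [ne_eq, ENNReal.ofReal_eq_zero, not_le]
    exact hc1pos
  have hC2ne : C₂ ≠ 0 := by
    rw [hC2def]
    simp only [ne_eq, ENNReal.ofReal_eq_zero, not_le]
    exact hc2pos
  have hC2invtop : C₂⁻¹ ≠ ⊤ := ENNReal.inv_ne_top.mpr hC2ne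
  have hmax1ne : ∀ x, max (F x) (C₁ * G x) ≠ 0 := by
    intro x hz
    have hFz : F x = 0 := le_zero_iff.mp ((le_max_left _ _).trans_eq hz)
    have hCG : C₁ * G x = 0 := le_zero_iff.mp ((le_max_right _ _).trans_eq hz)
    have hGz : G x = 0 := by
      rcases mul_eq_zero.mp hCG with h' | h'
      · exact absurd h' hC1ne
      · exact h'
    have h := hFG1 x
    rw [hFz, hGz, add_zero] at h
    exact zero_ne_one h
  have hmax2ne : ∀ x, max (G x) (C₂ * F x) ≠ 0 := by
    intro x hz
    have hGz : G x = 0 := le_zero_iff.mp ((le_max_left _ _).trans_eq hz)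
    have hCF : C₂ * F x = 0 := le_zero_iff.mp ((le_max_right _ _).trans_eq hz)
    have hFz : F x = 0 := by
      rcases mul_eq_zero.mp hCF with h' | h'
      · exact absurd h' hC2ne
      · exact h'
    have h := hFG1 x
    rw [hFz, hGz, add_zero] at h
    exact zero_ne_one h
  have hmax1top : ∀ x, max (F x) (C₁ * G x) ≠ ⊤ := fun x =>
    (max_lt ((hF1 x).trans_lt ENNReal.one_lt_top)
      (lt_of_le_of_lt ((mul_le_mul_right (hG1 x) C₁).trans_eq (mul_one C₁))
        (Ne.lt_top hC1top))).ne
  have hmax2top : ∀ x, max (G x) (C₂ * F x) ≠ ⊤ := fun x =>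
    (max_lt ((hG1 x).trans_lt ENNReal.one_lt_top)
      (lt_of_le_of_lt ((mul_le_mul_right (hF1 x) C₂).trans_eq (mul_one C₂))
        (Ne.lt_top hC2top))).ne
  have hd1ne : ∀ x, d₁ x ≠ 0 := fun x => mul_ne_zero he1_ne (hmax1ne x)
  have hd2ne : ∀ x, d₂ x ≠ 0 := fun x => mul_ne_zero he1_ne (hmax2ne x)
  have hd1top : ∀ x, d₁ x ≠ ⊤ := fun x => ENNReal.mul_ne_top he1_top (hmax1top x)
  have hd2top : ∀ x, d₂ x ≠ ⊤ := fun x => ENNReal.mul_ne_top he1_top (hmax2top x)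
  set r : ℝ → ℝ≥0∞ := fun x => d₁ x / d₂ x with hrdef
  have hrm : Measurable r := hd1m.div hd2m
  have hC1le : C₁ ≤ C₂⁻¹ := ENNReal.le_inv_iff_mul_le.mpr hCC
  have hkey1 : ∀ x, C₁ * max (G x) (C₂ * F x) ≤ max (F x) (C₁ * G x) := by
    intro x
    rw [ennreal_mul_max]
    refine max_le (le_max_right _ _) ?_
    calc C₁ * (C₂ * F x) = C₁ * C₂ * F x := by ring
      _ ≤ 1 * F x := mul_le_mul_left hCC _
      _ ≤ max (F x) (C₁ * G x) := by rw [one_mul]; exact le_max_left _ _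
  have hkey2 : ∀ x, max (F x) (C₁ * G x) ≤ C₂⁻¹ * max (G x) (C₂ * F x) := by
    intro x
    rw [ennreal_mul_max]
    refine max_le ?_ ?_
    · calc F x = C₂⁻¹ * (C₂ * F x) := by
            rw [← mul_assoc, ENNReal.inv_mul_cancel hC2ne hC2top, one_mul]
        _ ≤ _ := le_max_right _ _
    · exact le_trans (mul_le_mul_left hC1le _) (le_max_left _ _)
  have hr_ge : ∀ x, C₁ ≤ r x := by
    intro x
    simp only [hrdef]
    rw [ENNReal.le_div_iff_mul_le (Or.inl (hd2ne x)) (Or.inl (hd2top x))]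
    calc C₁ * d₂ x = e1 * (C₁ * max (G x) (C₂ * F x)) := by simp only [hd2def]; ring
      _ ≤ e1 * max (F x) (C₁ * G x) := mul_le_mul_right (hkey1 x) e1
      _ = d₁ x := by simp only [hd1def]
  have hr_le : ∀ x, r x ≤ C₂⁻¹ := by
    intro x
    simp only [hrdef]
    rw [ENNReal.div_le_iff_le_mul (Or.inl (hd2ne x)) (Or.inl (hd2top x))]
    calc d₁ x = e1 * max (F x) (C₁ * G x) := by simp only [hd1def]
      _ ≤ e1 * (C₂⁻¹ * max (G x) (C₂ * F x)) := mul_le_mul_right (hkey2 x) e1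
      _ = C₂⁻¹ * d₂ x := by simp only [hd2def]; ring
  have hr_ne : ∀ x, r x ≠ 0 := fun x hz => hC1ne (le_zero_iff.mp ((hr_ge x).trans_eq hz))
  have hr_top : ∀ x, r x ≠ ⊤ := fun x => ne_top_of_le_ne_top hC2invtop (hr_le x)
  have hrR_pos : ∀ x, 0 < (r x).toReal := fun x => ENNReal.toReal_pos (hr_ne x) (hr_top x)
  have hrR_ge : ∀ x, c₁ ≤ (r x).toReal := by
    intro x
    have h := ENNReal.toReal_mono (hr_top x) (hr_ge x)
    rwa [hC1def, ENNReal.toReal_ofReal hc₁] at h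
  have hrR_le : ∀ x, (r x).toReal ≤ c₂⁻¹ := by
    intro x
    have h := ENNReal.toReal_mono hC2invtop (hr_le x)
    rwa [hC2def, ← ENNReal.ofReal_inv_of_pos hc2pos,
      ENNReal.toReal_ofReal (by positivity)] at h
  set L : ℝ → ℝ := fun x => Real.log (r x).toReal with hLdef
  have hLm : Measurable L := (ENNReal.measurable_toReal.comp hrm).log
  have hLlb : ∀ x, Real.log c₁ ≤ L x := fun x => Real.log_le_log hc1pos (hrR_ge x)
  have hLub : ∀ x, L x ≤ Real.log c₂⁻¹ := fun x => Real.log_le_log (hrR_pos x) (hrR_le x)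
  have hLbound : ∀ x, |L x| ≤ |Real.log c₁| + |Real.log c₂⁻¹| := by
    intro x
    rw [abs_le]
    constructor
    · have h1 := hLlb x
      have h2 := neg_abs_le (Real.log c₁)
      have h3 := abs_nonneg (Real.log c₂⁻¹)
      linarith
    · have h1 := hLub x
      have h2 := le_abs_self (Real.log c₂⁻¹)
      have h3 := abs_nonneg (Real.log c₁)
      linarith
  have hLint : ∀ (μ : Measure ℝ), IsFiniteMeasure μ → Integrable L μ := by
    intro μ hmu
    exact @integrable_of_bound μ hmu L hLm _ hLbound
  -- splitting of P₀
  set w : ℝ → ℝ≥0∞ :=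
    fun x => e1 * Set.indicator {y | F y < C₁ * G y} (fun y => C₁ * G y - F y) x with hwdef
  have hS1m : MeasurableSet {y : ℝ | F y < C₁ * G y} := measurableSet_lt hFm (hGm.const_mul C₁)
  have hwm : Measurable w := (((hGm.const_mul C₁).sub hFm).indicator hS1m).const_mul e1
  have hd1split : d₁ = fun x => e1 * F x + w x := by
    funext x
    simp only [hd1def, hwdef]
    by_cases h : x ∈ {y : ℝ | F y < C₁ * G y}
    · rw [Set.indicator_of_mem h]
      have hle : F x ≤ C₁ * G x := le_of_lt h
      rw [max_eq_right hle, ← mul_add, add_tsub_cancel_of_le hle]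
    · rw [Set.indicator_of_notMem h, mul_zero, add_zero, max_eq_left (not_lt.mp h)]
  have hP₀split : ν.withDensity d₁ = e1 • η + ν.withDensity w := by
    rw [hd1split]
    rw [show (fun x => e1 * F x + w x) = (fun x => e1 * F x) + w from rfl]
    rw [withDensity_add_left (hFm.const_mul e1)]
    congr 1
    rw [show (fun x => e1 * F x) = e1 • F from rfl, withDensity_smul e1 hFm, hηF]
  have hwmass : (ν.withDensity w) Set.univ = eε := by
    have h := hmassmix η H₁ hη hH₁
    rw [hP₀, hP₀split] at h
    simp only [Measure.add_apply, Measure.smul_apply, smul_eq_mul, measure_univ, mul_one] at h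
    rw [heε_eq]
    exact ENNReal.eq_sub_of_add_eq he1_top (by rw [add_comm]; exact h)
  haveI hμ₁fin : IsFiniteMeasure (ν.withDensity w) :=
    ⟨by rw [hwmass]; exact Ne.lt_top heε_top⟩
  have hrS1 : ∀ x, F x < C₁ * G x → r x = C₁ := by
    intro x h
    have hGne : G x ≠ 0 := by
      intro hz
      rw [hz, mul_zero] at h
      exact absurd h (not_lt.mpr zero_le)
    have hmaxG : max (G x) (C₂ * F x) = G x := max_eq_left (by
      calc C₂ * F x ≤ C₂ * (C₁ * G x) := mul_le_mul_right h.le _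
        _ = C₁ * C₂ * G x := by ring
        _ ≤ 1 * G x := mul_le_mul_left hCC _
        _ = G x := one_mul _)
    simp only [hrdef, hd1def, hd2def, hmaxG, max_eq_right h.le]
    rw [ENNReal.mul_div_mul_left _ _ he1_ne he1_top, mul_div_assoc,
      ENNReal.div_self hGne (hGtop x), mul_one]
  have hI1 : ∫ x, L x ∂(mix ε η H₁) = (1 - ε) * ∫ x, L x ∂η + ε * Real.log c₁ := by
    rw [hP₀, hP₀split]
    have hint1 : Integrable L (e1 • η) := (hLint η inferInstance).smul_measure he1_top
    have hint2 : Integrable L (ν.withDensity w) := hLint _ hμ₁fin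
    rw [integral_add_measure hint1 hint2, integral_smul_measure]
    have hwL : ∫ x, L x ∂(ν.withDensity w) = ε * Real.log c₁ := by
      have hae : ∀ᵐ x ∂(ν.withDensity w), L x = Real.log c₁ := by
        rw [ae_withDensity_iff hwm]
        refine Filter.Eventually.of_forall fun x hx => ?_
        have hxS : F x < C₁ * G x := by
          by_contra hxn
          have hxn' : x ∉ {y : ℝ | F y < C₁ * G y} := hxn
          simp only [hwdef] at hx
          rw [Set.indicator_of_notMem hxn', mul_zero] at hx
          exact hx rfl
        simp only [hLdef]
        rw [hrS1 x hxS, hC1def, ENNReal.toReal_ofReal hc₁]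
      rw [integral_congr_ae hae, integral_const, measureReal_def, hwmass, heεdef,
        ENNReal.toReal_ofReal hε0.le, smul_eq_mul]
    rw [hwL, he1tr, smul_eq_mul]
  have hI2 : ∀ (Hm : Measure ℝ), IsProbabilityMeasure Hm →
      (1 - ε) * ∫ x, L x ∂η + ε * Real.log c₁ ≤ ∫ x, L x ∂(mix ε η Hm) := by
    intro Hm hHm
    haveI := hHm
    have hmixeq : mix ε η Hm = e1 • η + eε • Hm := by simp only [mix, ← he1def, ← heεdef]
    rw [hmixeq, integral_add_measure ((hLint η inferInstance).smul_measure he1_top)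
      ((hLint Hm inferInstance).smul_measure heε_top), integral_smul_measure,
      integral_smul_measure, he1tr, heεtr, smul_eq_mul, smul_eq_mul]
    have hlog : Real.log c₁ ≤ ∫ x, L x ∂Hm := by
      have h1 := integral_mono_ae (integrable_const (Real.log c₁)) (hLint Hm inferInstance)
        (Filter.Eventually.of_forall hLlb)
      rwa [integral_const, probReal_univ, one_smul] at h1
    have h2 := mul_le_mul_of_nonneg_left hlog hε0.le
    linarith
  -- rnDeriv of the optimal pair
  have hdd : ν.withDensity d₁ = (ν.withDensity d₂).withDensity r := by
    rw [← withDensity_mul ν hd2m hrm]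
    refine withDensity_congr_ae (Filter.Eventually.of_forall fun x => ?_)
    simp only [Pi.mul_apply, hrdef]
    rw [ENNReal.mul_div_cancel (hd2ne x) (hd2top x)]
  haveI : IsFiniteMeasure (ν.withDensity d₂) := by rw [← hQ₀]; infer_instance
  have hAC₀ : mix ε η H₁ ≪ mix ε κ H₂ := by
    rw [hP₀, hQ₀, hdd]
    exact withDensity_absolutelyContinuous _ _
  have hrn₀ : (mix ε η H₁).rnDeriv (mix ε κ H₂) =ᵐ[mix ε κ H₂] r := by
    rw [hP₀, hQ₀, hdd]
    exact Measure.rnDeriv_withDensity (ν.withDensity d₂) hrm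
  have hrn₀' : (mix ε η H₁).rnDeriv (mix ε κ H₂) =ᵐ[mix ε η H₁] r := hAC₀.ae_le hrn₀
  have hLae : (fun x => Real.log ((mix ε η H₁).rnDeriv (mix ε κ H₂) x).toReal)
      =ᵐ[mix ε η H₁] L := by
    filter_upwards [hrn₀'] with x hx
    simp only [hLdef]
    rw [hx]
  have hIntL₀ : Integrable
      (fun x => Real.log ((mix ε η H₁).rnDeriv (mix ε κ H₂) x).toReal) (mix ε η H₁) :=
    (hLint _ hPfin).congr hLae.symm
  have hKL₀ : KLdiv (mix ε η H₁) (mix ε κ H₂) = ENNReal.ofReal (∫ x, L x ∂(mix ε η H₁)) := by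
    have hc : (mix ε η H₁) ≪ (mix ε κ H₂) ∧ Integrable
        (fun x => Real.log ((mix ε η H₁).rnDeriv (mix ε κ H₂) x).toReal) (mix ε η H₁) :=
      ⟨hAC₀, hIntL₀⟩
    simp only [KLdiv]
    rw [if_pos hc, integral_congr_ae hLae]
  by_cases hcond : (mix ε η H) ≪ (mix ε κ H') ∧ Integrable
      (fun x => Real.log ((mix ε η H).rnDeriv (mix ε κ H') x).toReal) (mix ε η H)
  · -- the interesting case
    set ρ : ℝ → ℝ≥0∞ := (mix ε η H).rnDeriv (mix ε κ H') with hρdef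
    have hAC := hcond.1
    have hInt := hcond.2
    have hρm : Measurable ρ := Measure.measurable_rnDeriv _ _
    have hrg : ∀ x, G x * r x + C₂⁻¹ * (C₂ * F x - G x) = max (F x) (C₁ * G x) := by
      intro x
      rcases le_or_gt (C₂ * F x) (G x) with h | h
      · rw [tsub_eq_zero_of_le h, mul_zero, add_zero]
        have hGne : G x ≠ 0 := by
          intro hz
          rw [hz] at h
          have hFz : F x = 0 := by
            rcases mul_eq_zero.mp (le_zero_iff.mp h) with h' | h'
            · exact absurd h' hC2ne
            · exact h'
          have hfg := hFG1 x
          rw [hFz, hz, add_zero] at hfg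
          exact zero_ne_one hfg
        simp only [hrdef, hd1def, hd2def, max_eq_left h]
        rw [ENNReal.mul_div_mul_left _ _ he1_ne he1_top]
        exact ENNReal.mul_div_cancel hGne (hGtop x)
      · have hFne : F x ≠ 0 := by
          intro hz
          rw [hz, mul_zero] at h
          exact absurd h (not_lt.mpr zero_le)
        have hmax1 : max (F x) (C₁ * G x) = F x := max_eq_left (by
          calc C₁ * G x ≤ C₁ * (C₂ * F x) := mul_le_mul_right h.le _
            _ = C₁ * C₂ * F x := by ring
            _ ≤ 1 * F x := mul_le_mul_left hCC _
            _ = F x := one_mul _)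
        have hrx : r x = C₂⁻¹ := by
          simp only [hrdef, hd1def, hd2def, hmax1, max_eq_right h.le]
          rw [ENNReal.mul_div_mul_left _ _ he1_ne he1_top, div_eq_mul_inv,
            ENNReal.mul_inv (Or.inl hC2ne) (Or.inl hC2top), mul_comm C₂⁻¹ (F x)⁻¹,
            ← mul_assoc, ENNReal.mul_inv_cancel hFne (hFtop x), one_mul]
        have hle : C₂⁻¹ * G x ≤ F x := by
          calc C₂⁻¹ * G x ≤ C₂⁻¹ * (C₂ * F x) := mul_le_mul_right h.le _
            _ = C₂⁻¹ * C₂ * F x := by ring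
            _ = F x := by rw [ENNReal.inv_mul_cancel hC2ne hC2top, one_mul]
        rw [hrx, hmax1, ENNReal.mul_sub (fun _ _ => hC2invtop), ← mul_assoc,
          ENNReal.inv_mul_cancel hC2ne hC2top, one_mul, mul_comm (G x) C₂⁻¹]
        exact add_tsub_cancel_of_le hle
    have hGrm : Measurable fun x => G x * r x := hGm.mul hrm
    have hsub2m : Measurable fun x => C₂ * F x - G x := (hFm.const_mul C₂).sub hGm
    have h1 : ∫⁻ x, G x * r x ∂ν + C₂⁻¹ * ∫⁻ x, (C₂ * F x - G x) ∂ν = e1⁻¹ := by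
      rw [← lintegral_const_mul C₂⁻¹ hsub2m, ← lintegral_add_left hGrm,
        lintegral_congr hrg, hM1]
    have hE2top : e1⁻¹ - 1 ≠ ⊤ :=
      ne_top_of_le_ne_top (ENNReal.inv_ne_top.mpr he1_ne) tsub_le_self
    have hlintκ : ∫⁻ x, r x ∂κ = e1⁻¹ - C₂⁻¹ * (e1⁻¹ - 1) := by
      have h2 : ∫⁻ x, r x ∂κ = ∫⁻ x, G x * r x ∂ν := by
        rw [← hκG, lintegral_withDensity_eq_lintegral_mul ν hGm hrm]
        simp only [Pi.mul_apply]
      rw [h2]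
      rw [hE2] at h1
      exact ENNReal.eq_sub_of_add_eq (ENNReal.mul_ne_top hC2invtop hE2top) h1
    have hC2ge : eε ≤ C₂ := by
      have hb : e1⁻¹ - 1 ≤ C₂ := by
        rw [← hE2]
        calc ∫⁻ x, (C₂ * F x - G x) ∂ν ≤ ∫⁻ x, C₂ * F x ∂ν := lintegral_mono fun x => tsub_le_self
          _ = C₂ * ∫⁻ x, F x ∂ν := lintegral_const_mul C₂ hFm
          _ = C₂ := by rw [hlintF, mul_one]
      refine le_trans (ENNReal.le_sub_of_add_le_right ENNReal.one_ne_top ?_) hb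
      have hr2 : (ε + 1) * (1 - ε) ≤ 1 := by nlinarith
      have hr1 : ε + 1 ≤ (1 - ε)⁻¹ := by
        calc ε + 1 = (ε + 1) * (1 - ε) * (1 - ε)⁻¹ := by
              rw [mul_assoc, mul_inv_cancel₀ (ne_of_gt hε1), mul_one]
          _ ≤ 1 * (1 - ε)⁻¹ := mul_le_mul_of_nonneg_right hr2 (inv_nonneg.mpr hε1.le)
          _ = (1 - ε)⁻¹ := one_mul _
      rw [heεdef, he1def, ← ENNReal.ofReal_one, ← ENNReal.ofReal_add hε0.le zero_le_one,
        ← ENNReal.ofReal_inv_of_pos hε1]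
      exact ENNReal.ofReal_le_ofReal hr1
    have heεC2 : eε * C₂⁻¹ ≤ 1 := by
      calc eε * C₂⁻¹ ≤ C₂ * C₂⁻¹ := mul_le_mul_left hC2ge _
        _ = 1 := ENNReal.mul_inv_cancel hC2ne hC2top
    have hmixQ' : mix ε κ H' = e1 • κ + eε • H' := by simp only [mix, ← he1def, ← heεdef]
    have hlrQ : ∫⁻ x, r x ∂(mix ε κ H') ≤ 1 := by
      rw [hmixQ', lintegral_add_measure, lintegral_smul_measure, lintegral_smul_measure]
      have hH'le : ∫⁻ x, r x ∂H' ≤ C₂⁻¹ := by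
        calc ∫⁻ x, r x ∂H' ≤ ∫⁻ x, C₂⁻¹ ∂H' := lintegral_mono hr_le
          _ = C₂⁻¹ := by rw [lintegral_const, measure_univ, mul_one]
      calc e1 * ∫⁻ x, r x ∂κ + eε * ∫⁻ x, r x ∂H'
          ≤ e1 * (e1⁻¹ - C₂⁻¹ * (e1⁻¹ - 1)) + eε * C₂⁻¹ := by
            refine add_le_add (le_of_eq ?_) (mul_le_mul_right hH'le _)
            rw [hlintκ]
        _ = (1 - eε * C₂⁻¹) + eε * C₂⁻¹ := by
            rw [ENNReal.mul_sub (fun _ _ => he1_top), ENNReal.mul_inv_cancel he1_ne he1_top]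
            congr 1
            rw [← mul_assoc, mul_comm e1 C₂⁻¹, mul_assoc,
              ENNReal.mul_sub (fun _ _ => he1_top), ENNReal.mul_inv_cancel he1_ne he1_top,
              mul_one, ← heε_eq, mul_comm]
        _ = 1 := tsub_add_cancel_of_le heεC2
    have hPd : (mix ε κ H').withDensity ρ = mix ε η H := Measure.withDensity_rnDeriv_eq _ _ hAC
    have hlrP : ∫⁻ x, r x / ρ x ∂(mix ε η H) ≤ 1 := by
      rw [← hPd, lintegral_withDensity_eq_lintegral_mul _ hρm (g := fun x => r x / ρ x) (hrm.div hρm)]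
      refine le_trans (lintegral_mono fun x => ?_) hlrQ
      simp only [Pi.mul_apply]
      rcases eq_or_ne (ρ x) 0 with h0 | h0
      · rw [h0, zero_mul]; exact zero_le
      rcases eq_or_ne (ρ x) ⊤ with ht | ht
      · rw [ht, ENNReal.div_top, mul_zero]; exact zero_le
      · rw [ENNReal.mul_div_cancel h0 ht]
    have hdivm : Measurable fun x => r x / ρ x := hrm.div hρm
    have hlrP_ne : ∫⁻ x, r x / ρ x ∂(mix ε η H) ≠ ⊤ :=
      ne_top_of_le_ne_top ENNReal.one_ne_top hlrP
    have hintdiv : Integrable (fun x => (r x / ρ x).toReal) (mix ε η H) :=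
      integrable_toReal_of_lintegral_ne_top hdivm.aemeasurable hlrP_ne
    have hρpos : ∀ᵐ x ∂(mix ε η H), 0 < ρ x := Measure.rnDeriv_pos hAC
    have hρfin : ∀ᵐ x ∂(mix ε η H), ρ x < ⊤ := hAC.ae_le (Measure.rnDeriv_lt_top _ _)
    have hpt : ∀ᵐ x ∂(mix ε η H),
        L x - Real.log (ρ x).toReal ≤ (r x / ρ x).toReal - 1 := by
      filter_upwards [hρpos, hρfin] with x h0 ht
      have hρR : 0 < (ρ x).toReal := ENNReal.toReal_pos h0.ne' ht.ne
      have hdivR : (r x / ρ x).toReal = (r x).toReal / (ρ x).toReal := ENNReal.toReal_div _ _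
      simp only [hLdef]
      rw [hdivR, ← Real.log_div (ne_of_gt (hrR_pos x)) (ne_of_gt hρR)]
      exact Real.log_le_sub_one_of_pos (div_pos (hrR_pos x) hρR)
    have hstep : ∫ x, L x ∂(mix ε η H) ≤ ∫ x, Real.log (ρ x).toReal ∂(mix ε η H) := by
      have h2 := integral_mono_ae ((hLint _ hPfin').sub hInt)
        (hintdiv.sub (integrable_const 1)) hpt
      simp only [Pi.sub_apply] at h2
      rw [integral_sub (hLint _ hPfin') hInt, integral_sub hintdiv (integrable_const 1),
        integral_const, measureReal_def, hmassmix η H hη hH, ENNReal.toReal_one, one_smul] at h2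
      have h3 : ∫ x, (r x / ρ x).toReal ∂(mix ε η H) ≤ 1 := by
        rw [integral_toReal hdivm.aemeasurable
          (by filter_upwards [hρpos] with x h0; exact ENNReal.div_lt_top (hr_top x) h0.ne')]
        calc (∫⁻ x, r x / ρ x ∂(mix ε η H)).toReal ≤ (1 : ℝ≥0∞).toReal :=
              ENNReal.toReal_mono ENNReal.one_ne_top hlrP
          _ = 1 := ENNReal.toReal_one
      linarith
    rw [hKL₀]
    simp only [KLdiv]
    rw [if_pos hcond]
    refine ENNReal.ofReal_le_ofReal ?_
    calc ∫ x, L x ∂(mix ε η H₁) = (1 - ε) * ∫ x, L x ∂η + ε * Real.log c₁ := hI1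
      _ ≤ ∫ x, L x ∂(mix ε η H) := hI2 H hH
      _ ≤ _ := hstep
  · simp only [KLdiv]
    rw [if_neg hcond]
    exact le_top
end
end
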